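/- arXiv:2003.08280 — 4 statements merged into one kernel-verified Lean document; each statement's English description precedes it below -/
import Mathlib

section
/- Let f be a finite measurable function on (X, 𝒳, μ, T). If sup_{n≥0} |∑_{i=-n}^{n} f∘T^i| < +∞ almost everywhere on a set of positive measure, then there exists a bounded measurable function g : X → ℝ such that f = g − g∘T μ-almost everywhere. -/
open MeasureTheory Filter Topology RealInnerProductSpace
open scoped ENNReal

set_option linter.unusedSectionVars false
set_option linter.unusedTactic false
set_option linter.unusedVariables false
set_option maxHeartbeats 1000000

namespace Prop4Aux

variable {X : Type*} [MeasurableSpace X]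


variable {X : Type*} [MeasurableSpace X]

noncomputable def FS (T : Equiv.Perm X) (f : X → ℝ) (x : X) (a : ℤ) : ℝ :=
  if 0 ≤ a then ∑ i ∈ Finset.Ico (0:ℤ) a, f ((T ^ i) x)
  else -∑ i ∈ Finset.Ico a (0:ℤ), f ((T ^ i) x)

lemma zpow_add_apply (T : Equiv.Perm X) (i j : ℤ) (x : X) :
    (T ^ (i + j)) x = (T ^ i) ((T ^ j) x) := by
  rw [zpow_add, Equiv.Perm.mul_apply]

lemma measurable_zpow (T : Equiv.Perm X) (hTmeas : Measurable (⇑T))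
    (hTmeas' : Measurable (⇑T.symm)) (i : ℤ) : Measurable (⇑(T ^ i)) := by
  have hiter : ∀ (g : X → X), Measurable g → ∀ n : ℕ, Measurable (g^[n]) := by
    intro g hg n
    induction n with
    | zero => simpa using measurable_id
    | succ n ih => rw [Function.iterate_succ]; exact ih.comp hg
  rcases i with n | n
  · show Measurable ⇑(T ^ (n:ℤ))
    rw [zpow_natCast, Equiv.Perm.coe_pow]
    exact hiter _ hTmeas n
  · have h1 : (T ^ (Int.negSucc n)) = (T⁻¹) ^ (n+1) := by
      rw [zpow_negSucc, inv_pow]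
    rw [h1, Equiv.Perm.coe_pow]
    exact hiter _ hTmeas' (n+1)

lemma sum_Ico_split (g : ℤ → ℝ) {a b c : ℤ} (h1 : a ≤ b) (h2 : b ≤ c) :
    ∑ i ∈ Finset.Ico a c, g i = ∑ i ∈ Finset.Ico a b, g i + ∑ i ∈ Finset.Ico b c, g i := by
  rw [← Finset.Ico_union_Ico_eq_Ico h1 h2,
    Finset.sum_union (Finset.Ico_disjoint_Ico_consecutive a b c)]

lemma FS_sub (T : Equiv.Perm X) (f : X → ℝ) (x : X) {a b : ℤ} (hab : a ≤ b) :
    FS T f x b - FS T f x a = ∑ i ∈ Finset.Ico a b, f ((T ^ i) x) := by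
  rcases le_or_gt 0 a with ha | ha
  · have hb : 0 ≤ b := le_trans ha hab
    have h := sum_Ico_split (fun i => f ((T ^ i) x)) ha hab
    rw [FS, FS, if_pos ha, if_pos hb]
    linarith
  · rcases le_or_gt 0 b with hb | hb
    · have h := sum_Ico_split (fun i => f ((T ^ i) x)) ha.le hb
      rw [FS, FS, if_pos hb, if_neg (not_le.mpr ha)]
      linarith
    · have h := sum_Ico_split (fun i => f ((T ^ i) x)) hab hb.le
      rw [FS, FS, if_neg (not_le.mpr ha), if_neg (not_le.mpr hb)]
      linarith

lemma FS_zero (T : Equiv.Perm X) (f : X → ℝ) (x : X) : FS T f x 0 = 0 := by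
  simp [FS]

lemma FS_one (T : Equiv.Perm X) (f : X → ℝ) (x : X) : FS T f x 1 = f x := by
  have h := FS_sub T f x (a := 0) (b := 1) (by norm_num)
  rw [FS_zero] at h
  rw [show Finset.Ico (0:ℤ) 1 = {0} from rfl] at h
  simpa using h

lemma measurable_FS (T : Equiv.Perm X) (hTmeas : Measurable (⇑T))
    (hTmeas' : Measurable (⇑T.symm)) {f : X → ℝ} (hf : Measurable f) (a : ℤ) :
    Measurable (fun x => FS T f x a) := by
  unfold FS
  split_ifs with h
  · exact Finset.measurable_sum _ (fun i _ => hf.comp (measurable_zpow T hTmeas hTmeas' i))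
  · exact (Finset.measurable_sum _ (fun i _ => hf.comp (measurable_zpow T hTmeas hTmeas' i))).neg


lemma reflect {T : Equiv.Perm X} {f : X → ℝ} {A : Set X} {C : ℝ}
    (hA : ∀ y ∈ A, ∀ n : ℕ, |∑ i ∈ Finset.Icc (-(n:ℤ)) (n:ℤ), f ((T ^ i) y)| ≤ C)
    {x : X} {k : ℤ} (hk : (T ^ k) x ∈ A) (a : ℤ) :
    |FS T f x a - FS T f x (2*k+1-a)| ≤ C := by
  suffices H : ∀ a : ℤ, a ≤ k → |FS T f x a - FS T f x (2*k+1-a)| ≤ C by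
    rcases le_or_gt a k with h | h
    · exact H a h
    · have h2 : 2*k+1-a ≤ k := by omega
      have h3 := H _ h2
      rw [show 2*k+1-(2*k+1-a) = a from by ring] at h3
      rwa [abs_sub_comm]
  intro a ha
  have h1 : a ≤ 2*k+1-a := by omega
  have h2 : FS T f x (2*k+1-a) - FS T f x a = ∑ i ∈ Finset.Ico a (2*k+1-a), f ((T^i) x) :=
    FS_sub T f x h1
  set n : ℕ := (k - a).toNat with hn
  have hkan : (n:ℤ) = k - a := Int.toNat_of_nonneg (by omega)
  have h3 : ∑ i ∈ Finset.Icc (-(n:ℤ)) (n:ℤ), f ((T ^ i) ((T^k) x))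
      = ∑ i ∈ Finset.Ico a (2*k+1-a), f ((T^i) x) := by
    refine Finset.sum_nbij' (fun i => i + k) (fun i => i - k) ?_ ?_ ?_ ?_ ?_
    · intro i hi
      simp only [Finset.mem_Icc] at hi
      simp only [Finset.mem_Ico]
      omega
    · intro i hi
      simp only [Finset.mem_Ico] at hi
      simp only [Finset.mem_Icc]
      omega
    · intro i _; ring
    · intro i _; ring
    · intro i _
      rw [← zpow_add_apply]
  rw [abs_sub_comm, h2, ← h3]
  exact hA _ hk n

lemma translate {T : Equiv.Perm X} {f : X → ℝ} {A : Set X} {C : ℝ}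
    (hA : ∀ y ∈ A, ∀ n : ℕ, |∑ i ∈ Finset.Icc (-(n:ℤ)) (n:ℤ), f ((T ^ i) y)| ≤ C)
    {x : X} {k s : ℤ} (hk : (T ^ k) x ∈ A) (hks : (T ^ (k+s)) x ∈ A) (a : ℤ) :
    |FS T f x a - FS T f x (a + 2*s)| ≤ 2*C := by
  have h1 := reflect hA hk a
  have h2 := reflect hA hks (2*k+1-a)
  rw [show 2*(k+s)+1-(2*k+1-a) = a + 2*s from by ring] at h2
  calc |FS T f x a - FS T f x (a + 2*s)|
      ≤ |FS T f x a - FS T f x (2*k+1-a)| + |FS T f x (2*k+1-a) - FS T f x (a+2*s)| :=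
        abs_sub_le _ _ _
    _ ≤ C + C := add_le_add h1 h2
    _ = 2*C := by ring


lemma measurable_B {T : Equiv.Perm X} (hTmeas : Measurable (⇑T)) (hTmeas' : Measurable (⇑T.symm))
    {f : X → ℝ} (hf : Measurable f) (n : ℕ) :
    Measurable (fun x => ∑ i ∈ Finset.Icc (-(n:ℤ)) (n:ℤ), f ((T ^ i) x)) :=
  Finset.measurable_sum _ (fun i _ => hf.comp (measurable_zpow T hTmeas hTmeas' i))

lemma exists_CA {μ : Measure X} [IsProbabilityMeasure μ] {T : Equiv.Perm X}
    (hTmeas : Measurable (⇑T)) (hTmeas' : Measurable (⇑T.symm))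
    {f : X → ℝ} (hf : Measurable f)
    (hpos : 0 < μ {x | BddAbove (Set.range fun n : ℕ =>
      |∑ i ∈ Finset.Icc (-(n : ℤ)) (n : ℤ), f ((T ^ i) x)|)}) :
    ∃ (C : ℝ) (A : Set X), 0 ≤ C ∧ MeasurableSet A ∧ 0 < μ A ∧
      ∀ y ∈ A, ∀ n : ℕ, |∑ i ∈ Finset.Icc (-(n:ℤ)) (n:ℤ), f ((T ^ i) y)| ≤ C := by
  set S : ℕ → Set X := fun C => {x | ∀ n : ℕ,
    |∑ i ∈ Finset.Icc (-(n:ℤ)) (n:ℤ), f ((T ^ i) x)| ≤ C} with hS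
  have hSmeas : ∀ C, MeasurableSet (S C) := by
    intro C
    have : S C = ⋂ n : ℕ, (fun x => |∑ i ∈ Finset.Icc (-(n:ℤ)) (n:ℤ), f ((T ^ i) x)|) ⁻¹'
        (Set.Iic (C:ℝ)) := by
      ext x; simp [hS, Set.mem_iInter]
    rw [this]
    exact MeasurableSet.iInter fun n => ((measurable_B hTmeas hTmeas' hf n).abs) measurableSet_Iic
  have hsub : {x | BddAbove (Set.range fun n : ℕ =>
      |∑ i ∈ Finset.Icc (-(n : ℤ)) (n : ℤ), f ((T ^ i) x)|)} ⊆ ⋃ C : ℕ, S C := by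
    intro x hx
    obtain ⟨b, hb⟩ := hx
    refine Set.mem_iUnion.mpr ⟨⌈b⌉₊, fun n => ?_⟩
    exact le_trans (hb (Set.mem_range_self n)) (Nat.le_ceil b)
  by_contra h
  push_neg at h
  have hzero : ∀ C : ℕ, μ (S C) = 0 := by
    intro C
    by_contra hC
    obtain ⟨y, hy, n, hn⟩ := h (C:ℝ) (S C) (by positivity) (hSmeas C) (pos_iff_ne_zero.mpr hC)
    exact absurd (hy n) (not_le.mpr hn)
  have : μ {x | BddAbove (Set.range fun n : ℕ =>
      |∑ i ∈ Finset.Icc (-(n : ℤ)) (n : ℤ), f ((T ^ i) x)|)} = 0 :=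
    measure_mono_null hsub (measure_iUnion_null hzero)
  exact absurd this (ne_of_gt hpos)

lemma visiting {μ : Measure X} [IsProbabilityMeasure μ] {T : Equiv.Perm X}
    (hTmeas : Measurable (⇑T)) (hTmeas' : Measurable (⇑T.symm)) (hT : Ergodic (⇑T) μ)
    {B : Set X} (hB : MeasurableSet B) (hBpos : 0 < μ B) :
    ∀ᵐ x ∂μ, ∃ k : ℤ, (T ^ k) x ∈ B := by
  set U := ⋃ k : ℤ, (⇑(T ^ k)) ⁻¹' B with hU
  have hUmeas : MeasurableSet U :=
    MeasurableSet.iUnion fun k => (measurable_zpow T hTmeas hTmeas' k) hB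
  have hUinv : ⇑T ⁻¹' U = U := by
    ext x
    simp only [hU, Set.mem_iUnion, Set.mem_preimage]
    constructor
    · rintro ⟨k, hk⟩
      refine ⟨k + 1, ?_⟩
      rw [zpow_add_apply T k 1 x, zpow_one]
      exact hk
    · rintro ⟨k, hk⟩
      refine ⟨k - 1, ?_⟩
      rw [show (T ^ (k-1)) (T x) = (T ^ ((k-1) + 1)) x from by
        rw [zpow_add_apply T (k-1) 1 x, zpow_one]]
      simpa using hk
  rcases hT.toPreErgodic.ae_empty_or_univ hUmeas hUinv with hemp | huniv
  · exfalso
    have hBU : B ⊆ U := by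
      intro x hx
      refine Set.mem_iUnion.mpr ⟨0, ?_⟩
      simpa using hx
    have : μ U = 0 := by
      have := measure_congr hemp
      simpa using this
    have : μ B = 0 := measure_mono_null hBU this
    exact absurd this (ne_of_gt hBpos)
  · have : μ Uᶜ = 0 := ae_eq_univ.mp huniv
    filter_upwards [(MeasureTheory.measure_eq_zero_iff_ae_notMem.mp this)] with x hx
    have hxU : x ∈ U := by
      by_contra hc
      exact hx hc
    exact Set.mem_iUnion.mp hxU


lemma measurable_iterate {g : X → X} (hg : Measurable g) (n : ℕ) : Measurable (g^[n]) := by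
  induction n with
  | zero => simpa using measurable_id
  | succ n ih => rw [Function.iterate_succ]; exact ih.comp hg

lemma khintchine {μ : Measure X} [IsProbabilityMeasure μ] {T : Equiv.Perm X}
    (hTmeas : Measurable (⇑T)) (hT : Ergodic (⇑T) μ)
    {A : Set X} (hA : MeasurableSet A) (hApos : 0 < μ A) :
    ∃ L : ℕ, 1 ≤ L ∧ ∀ t : ℕ, ∃ s : ℕ, t ≤ s ∧ s ≤ t + L ∧
      0 < μ (A ∩ (⇑T)^[s] ⁻¹' A) := by
  classical
  have hmp : MeasurePreserving (⇑T) μ μ := hT.toMeasurePreserving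
  set E := Lp ℝ 2 μ with hE
  let Uli : E →ₗᵢ[ℝ] E := Lp.compMeasurePreservingₗᵢ ℝ (⇑T) hmp
  let U : E →L[ℝ] E := Uli.toContinuousLinearMap
  have hUnorm : ‖U‖ ≤ 1 := Uli.norm_toContinuousLinearMap_le
  have hUae : ∀ w : E, (U w : X → ℝ) =ᵐ[μ] (↑↑w ∘ ⇑T) := fun w =>
    Lp.coeFn_compMeasurePreserving w hmp
  -- the indicator of A
  let u : E := indicatorConstLp 2 hA (measure_ne_top μ A) (1:ℝ)
  -- iterated preimages of A
  let An : ℕ → Set X := fun n => (⇑T)^[n] ⁻¹' A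
  have hAn : ∀ n, MeasurableSet (An n) := fun n => (measurable_iterate hTmeas n) hA
  -- the iterates of U on u are the indicators of the `An`
  have hun : ∀ n : ℕ, ((⇑U)^[n] u : X → ℝ) =ᵐ[μ] (An n).indicator (fun _ => (1:ℝ)) := by
    intro n
    induction n with
    | zero =>
      simpa [An] using (indicatorConstLp_coeFn (p := 2) (hs := hA)
        (hμs := measure_ne_top μ A) (c := (1:ℝ)))
    | succ n ih =>
      have h1 : (⇑U)^[n+1] u = U ((⇑U)^[n] u) := Function.iterate_succ_apply' _ _ _
      rw [h1]
      refine (hUae _).trans ?_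
      have h2 : (↑↑((⇑U)^[n] u) ∘ ⇑T) =ᵐ[μ] ((An n).indicator (fun _ => (1:ℝ)) ∘ ⇑T) :=
        hmp.quasiMeasurePreserving.ae_eq_comp ih
      refine h2.trans (Filter.EventuallyEq.of_eq ?_)
      ext x
      by_cases hx : T x ∈ An n
      · have hx' : x ∈ An (n+1) := by
          simpa [An, Function.iterate_succ_apply] using hx
        simp [Function.comp, Set.indicator_of_mem hx, Set.indicator_of_mem hx']
      · have hx' : x ∉ An (n+1) := by
          simpa [An, Function.iterate_succ_apply] using hx
        simp [Function.comp, Set.indicator_of_notMem hx, Set.indicator_of_notMem hx']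
  -- the correlation sequence
  have hip : ∀ n : ℕ, ⟪u, (⇑U)^[n] u⟫ = (μ (A ∩ An n)).toReal := by
    intro n
    rw [L2.inner_indicatorConstLp_one hA (measure_ne_top μ A) ((⇑U)^[n] u)]
    have h1 : ∫ x in A, ((⇑U)^[n] u : X → ℝ) x ∂μ
        = ∫ x in A, (An n).indicator (fun _ => (1:ℝ)) x ∂μ :=
      integral_congr_ae (ae_restrict_of_ae (hun n))
    rw [h1, setIntegral_indicator (hAn n), setIntegral_const, smul_eq_mul, mul_one]
    rfl
  -- the constant function 1
  let one : E := indicatorConstLp 2 MeasurableSet.univ (measure_ne_top μ Set.univ) (1:ℝ)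
  have hone_ae : (one : X → ℝ) =ᵐ[μ] fun _ => (1:ℝ) := by
    refine (indicatorConstLp_coeFn (p := 2) (hs := MeasurableSet.univ)
      (hμs := measure_ne_top μ Set.univ) (c := (1:ℝ))).trans ?_
    simp
  have hone_fixed : U one = one := by
    apply Lp.ext
    refine (hUae one).trans ?_
    refine ((hmp.quasiMeasurePreserving.ae_eq_comp hone_ae).trans ?_).trans hone_ae.symm
    exact Filter.EventuallyEq.of_eq rfl
  have hone_norm : ‖one‖ = 1 := by
    have h1 : ⟪one, one⟫ = (1:ℝ) := by
      rw [L2.inner_indicatorConstLp_one MeasurableSet.univ (measure_ne_top μ Set.univ) one]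
      have : ∫ x in Set.univ, (one : X → ℝ) x ∂μ = ∫ x in Set.univ, (1:ℝ) ∂μ :=
        integral_congr_ae (ae_restrict_of_ae hone_ae)
      rw [this, setIntegral_const, smul_eq_mul, mul_one]
      simp [Measure.restrict_univ]
    have h2 : ‖one‖^2 = 1 := by rw [← real_inner_self_eq_norm_sq]; exact h1
    nlinarith [norm_nonneg one]
  -- basic quantities
  set α : ℝ := (μ A).toReal with hαdef
  have hα : 0 < α := ENNReal.toReal_pos hApos.ne' (measure_ne_top μ A)
  have hu_one : ⟪u, one⟫ = α := by
    rw [L2.inner_indicatorConstLp_one hA (measure_ne_top μ A) one]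
    have : ∫ x in A, (one : X → ℝ) x ∂μ = ∫ x in A, (1:ℝ) ∂μ :=
      integral_congr_ae (ae_restrict_of_ae hone_ae)
    rw [this, setIntegral_const, smul_eq_mul, mul_one]
    rfl
  -- the von Neumann mean ergodic theorem
  have hconv := U.tendsto_birkhoffAverage_orthogonalProjection hUnorm u
  set K := (U : E →L[ℝ] E).eqLocus (1 : E →L[ℝ] E) with hK
  set Pu : E := ↑(K.orthogonalProjectionOnto u) with hPu
  have hone_mem : one ∈ K := by
    rw [hK, LinearMap.mem_eqLocus]
    simpa using hone_fixed
  have hPu_mem : Pu ∈ K := (K.orthogonalProjectionOnto u).2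
  have hPu_fixed : U Pu = Pu := by
    have := hPu_mem
    rw [hK, LinearMap.mem_eqLocus] at this
    simpa using this
  have hPu_one : ⟪Pu, one⟫ = α := by
    have h0 : ⟪u - Pu, one⟫ = 0 := K.starProjection_inner_eq_zero u one hone_mem
    rw [inner_sub_left] at h0
    rw [← hu_one]; linarith [h0]
  have hu_Pu : α^2 ≤ ⟪u, Pu⟫ := by
    have h0 : ⟪u - Pu, Pu⟫ = 0 := K.starProjection_inner_eq_zero u Pu hPu_mem
    rw [inner_sub_left] at h0
    have h1 : ⟪u, Pu⟫ = ‖Pu‖^2 := by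
      rw [← real_inner_self_eq_norm_sq]; linarith [h0]
    have h2 : α ≤ ‖Pu‖ := by
      calc α = ⟪Pu, one⟫ := hPu_one.symm
        _ ≤ ‖Pu‖ * ‖one‖ := real_inner_le_norm Pu one
        _ = ‖Pu‖ := by rw [hone_norm, mul_one]
    calc α^2 ≤ ‖Pu‖^2 := by nlinarith
      _ = ⟪u, Pu⟫ := h1.symm
  -- iterate facts
  have hUnorm_map : ∀ w : E, ‖U w‖ = ‖w‖ := fun w => Uli.norm_map w
  have hUiter_norm : ∀ (t : ℕ) (w : E), ‖(⇑U)^[t] w‖ = ‖w‖ := by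
    intro t
    induction t with
    | zero => intro w; simp
    | succ t ih =>
      intro w
      rw [Function.iterate_succ_apply', hUnorm_map, ih]
  have hUiter_sub : ∀ (t : ℕ) (w w' : E), (⇑U)^[t] (w - w') = (⇑U)^[t] w - (⇑U)^[t] w' := by
    intro t
    induction t with
    | zero => intro w w'; simp
    | succ t ih =>
      intro w w'
      rw [Function.iterate_succ_apply', Function.iterate_succ_apply',
        Function.iterate_succ_apply', ih, map_sub]
  have hPu_iter : ∀ t : ℕ, (⇑U)^[t] Pu = Pu := fun t => Function.iterate_fixed hPu_fixed t
  -- choose N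
  set ε : ℝ := α^2 / (2 * (‖u‖ + 1)) with hε
  have hεpos : 0 < ε := by
    apply div_pos (by positivity)
    positivity
  obtain ⟨N₀, hN₀⟩ := Metric.tendsto_atTop.mp hconv ε hεpos
  set N : ℕ := max N₀ 1 with hN
  have hN1 : 1 ≤ N := le_max_right _ _
  set vN : E := birkhoffAverage ℝ (⇑U) id N u with hvN
  have hdist : ‖vN - Pu‖ < ε := by
    have := hN₀ N (le_max_left _ _)
    rwa [dist_eq_norm] at this
  refine ⟨N, hN1, fun t => ?_⟩
  -- expansion of the inner product
  have hexp : ⟪u, (⇑U)^[t] vN⟫ = (N:ℝ)⁻¹ * ∑ k ∈ Finset.range N, ⟪u, (⇑U)^[t+k] u⟫ := by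
    have h1 : (⇑U)^[t] vN = (N:ℝ)⁻¹ • ∑ k ∈ Finset.range N, (⇑U)^[t+k] u := by
      rw [hvN, birkhoffAverage, birkhoffSum]
      rw [← FunLike.coe_pow_eq_iterate]
      rw [_root_.map_smul, _root_.map_sum]
      congr 1
      refine Finset.sum_congr rfl (fun k _ => ?_)
      rw [FunLike.coe_pow_eq_iterate, id_eq, ← Function.iterate_add_apply]
    rw [h1, real_inner_smul_right, inner_sum]
  -- lower bound
  have hlb : α^2/2 ≤ ⟪u, (⇑U)^[t] vN⟫ := by
    have hsplit : ⟪u, (⇑U)^[t] vN⟫ = ⟪u, Pu⟫ + ⟪u, (⇑U)^[t] vN - Pu⟫ := by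
      have h := inner_add_right (𝕜 := ℝ) u Pu ((⇑U)^[t] vN - Pu)
      have h2 : Pu + ((⇑U)^[t] vN - Pu) = (⇑U)^[t] vN := by abel
      rw [h2] at h
      exact h
    have hz : ‖(⇑U)^[t] vN - Pu‖ = ‖vN - Pu‖ := by
      conv_lhs => rw [← hPu_iter t]
      rw [← hUiter_sub, hUiter_norm]
    have habs : |⟪u, (⇑U)^[t] vN - Pu⟫| ≤ ‖u‖ * ‖vN - Pu‖ := by
      rw [← hz]; exact abs_real_inner_le_norm u _
    have hub : ‖u‖ * ‖vN - Pu‖ ≤ α^2/2 := by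
      have h1 : ‖u‖ * ‖vN - Pu‖ ≤ (‖u‖ + 1) * ε := by
        apply mul_le_mul (by linarith [norm_nonneg u]) hdist.le (norm_nonneg _)
        positivity
      have h2 : (‖u‖ + 1) * ε = α^2/2 := by
        rw [hε]; field_simp
      linarith
    have : -(α^2/2) ≤ ⟪u, (⇑U)^[t] vN - Pu⟫ := by
      have := neg_abs_le ⟪u, (⇑U)^[t] vN - Pu⟫
      linarith [habs, hub]
    linarith [hsplit, hu_Pu, this]
  -- extract a good k
  have hsum_pos : 0 < ∑ k ∈ Finset.range N, ⟪u, (⇑U)^[t+k] u⟫ := by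
    by_contra hc
    push_neg at hc
    have h1 : (N:ℝ)⁻¹ * ∑ k ∈ Finset.range N, ⟪u, (⇑U)^[t+k] u⟫ ≤ 0 := by
      apply mul_nonpos_of_nonneg_of_nonpos
      · positivity
      · exact hc
    rw [← hexp] at h1
    nlinarith [hlb, sq_nonneg α, hα]
  obtain ⟨k, hk, hkpos⟩ : ∃ k ∈ Finset.range N, 0 < ⟪u, (⇑U)^[t+k] u⟫ := by
    by_contra hc
    push_neg at hc
    exact absurd (Finset.sum_nonpos (fun k hk => hc k hk)) (not_le.mpr hsum_pos)
  refine ⟨t + k, Nat.le_add_right _ _, ?_, ?_⟩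
  · have : k < N := Finset.mem_range.mp hk
    omega
  · have := hkpos
    rw [hip (t+k)] at this
    have h2 : 0 < μ (A ∩ An (t+k)) := (ENNReal.toReal_pos_iff.mp this).1
    exact h2


lemma coe_zpow_natCast (T : Equiv.Perm X) (s : ℕ) : (⇑(T ^ (s:ℤ)) : X → X) = (⇑T)^[s] := by
  rw [zpow_natCast, Equiv.Perm.coe_pow]

/-- The master translation lemma: a uniform bound for translations along multiples of `2*d`. -/
lemma master {μ : Measure X} [IsProbabilityMeasure μ] {T : Equiv.Perm X}
    (hTmeas : Measurable (⇑T)) (hTmeas' : Measurable (⇑T.symm)) (hT : Ergodic (⇑T) μ)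
    {f : X → ℝ} {A : Set X} {C : ℝ} (hA : MeasurableSet A) (hApos : 0 < μ A) (hC : 0 ≤ C)
    (hAbound : ∀ y ∈ A, ∀ n : ℕ, |∑ i ∈ Finset.Icc (-(n:ℤ)) (n:ℤ), f ((T ^ i) y)| ≤ C) :
    ∃ (d : ℤ) (K : ℝ), 1 ≤ d ∧ 0 ≤ K ∧
      ∀ᵐ x ∂μ, ∀ t a : ℤ, |FS T f x a - FS T f x (a + 2*d*t)| ≤ K := by
  classical
  obtain ⟨L, hL1, hLwin⟩ := khintchine hTmeas hT hA hApos
  -- the difference set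
  set D : Set ℤ := {s : ℤ | 1 ≤ s ∧ 0 < μ (A ∩ (⇑(T ^ s)) ⁻¹' A)} with hD
  -- a.e. translation bound for each s ∈ D
  have hM4 : ∀ s : ℤ, s ∈ D → ∀ᵐ x ∂μ, ∀ a : ℤ,
      |FS T f x a - FS T f x (a + 2*s)| ≤ 2*C := by
    intro s hs
    have hBmeas : MeasurableSet (A ∩ (⇑(T ^ s)) ⁻¹' A) :=
      hA.inter ((measurable_zpow T hTmeas hTmeas' s) hA)
    filter_upwards [visiting hTmeas hTmeas' hT hBmeas hs.2] with x hx a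
    obtain ⟨k, hk⟩ := hx
    have hk1 : (T ^ k) x ∈ A := hk.1
    have hk2 : (T ^ (k + s)) x ∈ A := by
      have := hk.2
      rw [Set.mem_preimage] at this
      rw [show k + s = s + k from add_comm k s, zpow_add_apply]
      exact this
    exact translate hAbound hk1 hk2 a
  -- the subgroup generated by D
  set Z : AddSubgroup ℤ := AddSubgroup.closure D with hZ
  -- property P z
  set P : ℤ → Prop := fun z => ∃ K : ℝ, 0 ≤ K ∧
    ∀ᵐ x ∂μ, ∀ a : ℤ, |FS T f x a - FS T f x (a + 2*z)| ≤ K with hP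
  have hPall : ∀ z ∈ Z, P z := by
    intro z hz
    refine AddSubgroup.closure_induction ?_ ?_ ?_ ?_ hz
    · intro s hs
      exact ⟨2*C, by linarith, hM4 s hs⟩
    · refine ⟨0, le_refl 0, ?_⟩
      filter_upwards with x a
      simp [mul_zero]
    · rintro y w _ _ ⟨K1, hK1, hae1⟩ ⟨K2, hK2, hae2⟩
      refine ⟨K1 + K2, by linarith, ?_⟩
      filter_upwards [hae1, hae2] with x h1 h2 a
      have e1 := h1 a
      have e2 := h2 (a + 2*y)
      have heq : a + 2*y + 2*w = a + 2*(y+w) := by ring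
      rw [heq] at e2
      calc |FS T f x a - FS T f x (a + 2*(y+w))|
          ≤ |FS T f x a - FS T f x (a + 2*y)| +
            |FS T f x (a + 2*y) - FS T f x (a + 2*(y+w))| := abs_sub_le _ _ _
        _ ≤ K1 + K2 := add_le_add e1 e2
    · rintro y _ ⟨K1, hK1, hae1⟩
      refine ⟨K1, hK1, ?_⟩
      filter_upwards [hae1] with x h1 a
      have e1 := h1 (a + 2*(-y))
      have heq : a + 2*(-y) + 2*y = a := by ring
      rw [heq] at e1
      rw [abs_sub_comm] at e1
      exact e1
  -- D is nonempty
  obtain ⟨s₁, hs₁t, hs₁L, hs₁pos⟩ := hLwin 1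
  have hs₁D : (s₁ : ℤ) ∈ D := by
    constructor
    · exact_mod_cast hs₁t
    · rw [coe_zpow_natCast]; exact hs₁pos
  -- generator of Z
  obtain ⟨d₀, hd₀⟩ := Int.subgroup_cyclic Z
  have hmem_iff : ∀ z : ℤ, z ∈ Z ↔ ∃ n : ℤ, n * d₀ = z := by
    intro z
    rw [hd₀, AddSubgroup.mem_closure_singleton]
    simp [smul_eq_mul]
  have hd₀ne : d₀ ≠ 0 := by
    intro hcontra
    have h1 : (s₁:ℤ) ∈ Z := AddSubgroup.subset_closure hs₁D
    obtain ⟨n, hn⟩ := (hmem_iff _).mp h1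
    rw [hcontra, mul_zero] at hn
    have : (1:ℤ) ≤ (s₁:ℤ) := hs₁D.1
    omega
  set d : ℤ := |d₀| with hd
  have hd1 : 1 ≤ d := by
    have := abs_pos.mpr hd₀ne
    omega
  have hdZ : d ∈ Z := by
    rcases abs_cases d₀ with ⟨h1, _⟩ | ⟨h1, _⟩
    · rw [hd, h1]
      exact (hmem_iff _).mpr ⟨1, one_mul _⟩
    · rw [hd, h1]
      exact (hmem_iff _).mpr ⟨-1, by ring⟩
  -- bound for remainders
  set Kfun : ℕ → ℝ := fun r => if h : (r:ℤ) ∈ Z then (hPall _ h).choose else 0 with hKfun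
  have hKfun_nonneg : ∀ r : ℕ, 0 ≤ Kfun r := by
    intro r
    simp only [hKfun]
    split_ifs with h
    · exact (hPall _ h).choose_spec.1
    · exact le_refl 0
  set Kmax : ℝ := (Finset.range (L+1)).sup' ⟨0, by simp⟩ Kfun with hKmax
  have hKmax_ge : ∀ r : ℕ, r ≤ L → Kfun r ≤ Kmax :=
    fun r hr => Finset.le_sup' Kfun (Finset.mem_range.mpr (by omega))
  have hKmax_nonneg : 0 ≤ Kmax := le_trans (hKfun_nonneg 0) (hKmax_ge 0 (by omega))
  refine ⟨d, 2*C + Kmax, hd1, by linarith, ?_⟩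
  -- the a.e. good set
  have hae1 : ∀ᵐ x ∂μ, ∀ s : ℤ, s ∈ D → ∀ a : ℤ,
      |FS T f x a - FS T f x (a + 2*s)| ≤ 2*C := by
    rw [MeasureTheory.ae_all_iff]
    intro s
    by_cases hs : s ∈ D
    · filter_upwards [hM4 s hs] with x hx
      intro _; exact hx
    · filter_upwards with x hs' a
      exact absurd hs' hs
  have hae2 : ∀ᵐ x ∂μ, ∀ r : ℕ, (r:ℤ) ∈ Z → ∀ a : ℤ,
      |FS T f x a - FS T f x (a + 2*(r:ℤ))| ≤ Kfun r := by
    rw [MeasureTheory.ae_all_iff]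
    intro r
    by_cases h : (r:ℤ) ∈ Z
    · filter_upwards [(hPall _ h).choose_spec.2] with x hx _ a
      simp only [hKfun, dif_pos h]
      exact hx a
    · filter_upwards with x h' a
      exact absurd h' h
  filter_upwards [hae1, hae2] with x hx1 hx2
  -- positive case
  have Hpos : ∀ t : ℤ, 1 ≤ t → ∀ a : ℤ, |FS T f x a - FS T f x (a + 2*d*t)| ≤ 2*C + Kmax := by
    intro t ht a
    have hdt1 : 1 ≤ d * t := by nlinarith
    obtain ⟨s₀, hs₀1, hs₀2, hs₀pos⟩ := hLwin (d*t).toNat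
    have hs₀D : (s₀ : ℤ) ∈ D := by
      constructor
      · have : 1 ≤ (d*t).toNat := by omega
        have : (1:ℤ) ≤ (s₀:ℤ) := by exact_mod_cast le_trans this hs₀1
        exact this
      · rw [coe_zpow_natCast]; exact hs₀pos
    have hs₀Z : (s₀ : ℤ) ∈ Z := AddSubgroup.subset_closure hs₀D
    have hdtZ : d * t ∈ Z := by
      have := AddSubgroup.zsmul_mem Z hdZ t
      rwa [smul_eq_mul, mul_comm] at this
    set r : ℤ := (s₀ : ℤ) - d * t with hr
    have hrZ : r ∈ Z := by
      rw [hr]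
      exact AddSubgroup.sub_mem Z hs₀Z hdtZ
    have hr0 : 0 ≤ r := by
      rw [hr]
      have h1 : ((d*t).toNat : ℤ) = d * t := Int.toNat_of_nonneg (by omega)
      have h2 : ((d*t).toNat : ℤ) ≤ (s₀ : ℤ) := by exact_mod_cast hs₀1
      omega
    have hrL : r.toNat ≤ L := by
      have h1 : ((d*t).toNat : ℤ) = d * t := Int.toNat_of_nonneg (by omega)
      have h2 : (s₀ : ℤ) ≤ ((d*t).toNat : ℤ) + L := by exact_mod_cast hs₀2
      omega
    have hrcast : ((r.toNat : ℤ)) = r := Int.toNat_of_nonneg hr0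
    -- first jump by 2*s₀
    have e1 : |FS T f x a - FS T f x (a + 2*(s₀:ℤ))| ≤ 2*C := hx1 _ hs₀D a
    -- jump back by the remainder
    have e2 : |FS T f x (a + 2*d*t) - FS T f x (a + 2*d*t + 2*r)| ≤ Kfun r.toNat := by
      have := hx2 r.toNat (by rwa [hrcast]) (a + 2*d*t)
      rwa [hrcast] at this
    have heq : a + 2*d*t + 2*r = a + 2*(s₀:ℤ) := by rw [hr]; ring
    rw [heq, abs_sub_comm] at e2
    calc |FS T f x a - FS T f x (a + 2*d*t)|
        ≤ |FS T f x a - FS T f x (a + 2*(s₀:ℤ))| +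
          |FS T f x (a + 2*(s₀:ℤ)) - FS T f x (a + 2*d*t)| := abs_sub_le _ _ _
      _ ≤ 2*C + Kfun r.toNat := add_le_add e1 e2
      _ ≤ 2*C + Kmax := by linarith [hKmax_ge r.toNat hrL]
  intro t a
  rcases lt_trichotomy t 0 with ht | ht | ht
  · have := Hpos (-t) (by omega) (a + 2*d*t)
    have heq : a + 2*d*t + 2*d*(-t) = a := by ring
    rw [heq, abs_sub_comm] at this
    exact this
  · rw [ht, mul_zero, add_zero, sub_self, abs_zero]
    linarith
  · exact Hpos t ht a


lemma mp_zpow {μ : Measure X} {T : Equiv.Perm X}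
    (hTmeas : Measurable (⇑T)) (hTmeas' : Measurable (⇑T.symm))
    (hmp : MeasurePreserving (⇑T) μ μ) (i : ℤ) : MeasurePreserving (⇑(T ^ i)) μ μ := by
  have e : X ≃ᵐ X := ⟨T, hTmeas, hTmeas'⟩
  rcases i with n | n
  · show MeasurePreserving (⇑(T ^ (n:ℤ))) μ μ
    rw [zpow_natCast, Equiv.Perm.coe_pow]
    exact hmp.iterate n
  · have h1 : (T ^ (Int.negSucc n)) = (T⁻¹) ^ (n+1) := by
      rw [zpow_negSucc, inv_pow]
    rw [h1, Equiv.Perm.coe_pow]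
    have hmp' : MeasurePreserving (⇑(T⁻¹)) μ μ :=
      MeasurePreserving.symm (⟨T, hTmeas, hTmeas'⟩ : X ≃ᵐ X) hmp
    exact hmp'.iterate (n+1)

/-- the single-step values of `FS` -/
lemma FS_single (T : Equiv.Perm X) (f : X → ℝ) (x : X) (m : ℤ) :
    FS T f x (m+1) - FS T f x m = f ((T ^ m) x) := by
  have h := FS_sub T f x (a := m) (b := m+1) (by omega)
  have h2 : Finset.Ico m (m+1) = {m} := by
    ext i; simp only [Finset.mem_Ico, Finset.mem_singleton]; omega
  rw [h, h2, Finset.sum_singleton]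

/-- A `T^(2d)`-invariant set with measure `< 1/(2d)` is null. -/
lemma small_invariant_null {μ : Measure X} [IsProbabilityMeasure μ] {T : Equiv.Perm X}
    (hTmeas : Measurable (⇑T)) (hTmeas' : Measurable (⇑T.symm)) (hT : Ergodic (⇑T) μ)
    {d : ℤ} (hd : 1 ≤ d) {S : Set X} (hSmeas : MeasurableSet S)
    (hSinv : (⇑(T ^ (2*d))) ⁻¹' S = S)
    (hsmall : μ S < (((2*d).toNat : ℕ) : ℝ≥0∞)⁻¹) : μ S = 0 := by
  by_contra hpos
  set dn : ℕ := (2*d).toNat with hdn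
  have hdn2 : 2 ≤ dn := by omega
  have hdncast : ((dn:ℕ):ℤ) = 2*d := Int.toNat_of_nonneg (by omega)
  -- the union of the translates
  set Uset : Set X := ⋃ j ∈ Finset.range dn, (⇑(T ^ (j:ℤ))) ⁻¹' S with hUset
  have hUmeas : MeasurableSet Uset :=
    MeasurableSet.biUnion (Finset.range dn).countable_toSet
      (fun j _ => (measurable_zpow T hTmeas hTmeas' (j:ℤ)) hSmeas)
  have hmem : ∀ x : X, x ∈ Uset ↔ ∃ j : ℕ, j < dn ∧ (T ^ (j:ℤ)) x ∈ S := by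
    intro x
    simp only [hUset, Set.mem_iUnion, Set.mem_preimage, Finset.mem_range, exists_prop]
  have hSper : ∀ x : X, (T ^ (2*d)) x ∈ S ↔ x ∈ S := by
    intro x
    constructor
    · intro h
      rw [← hSinv]; exact h
    · intro h
      have : x ∈ (⇑(T ^ (2*d))) ⁻¹' S := by rw [hSinv]; exact h
      exact this
  have hUinv : (⇑T) ⁻¹' Uset = Uset := by
    ext x
    rw [Set.mem_preimage, hmem, hmem]
    constructor
    · rintro ⟨j, hj, hjS⟩
      by_cases hj1 : j + 1 < dn
      · refine ⟨j+1, hj1, ?_⟩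
        have : (T ^ ((j:ℤ)+1)) x = (T ^ (j:ℤ)) (T x) := by
          rw [zpow_add_apply T (j:ℤ) 1 x, zpow_one]
        rw [show (((j+1:ℕ)):ℤ) = (j:ℤ)+1 by push_cast; ring, this]
        exact hjS
      · -- j + 1 = dn
        have hj2 : j + 1 = dn := by omega
        refine ⟨0, by omega, ?_⟩
        have h3 : (T ^ ((j:ℤ)+1)) x ∈ S := by
          have : (T ^ ((j:ℤ)+1)) x = (T ^ (j:ℤ)) (T x) := by
            rw [zpow_add_apply T (j:ℤ) 1 x, zpow_one]
          rw [this]; exact hjS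
        have h4 : ((j:ℤ)+1) = 2*d := by omega
        rw [h4] at h3
        have h5 : x ∈ S := (hSper x).mp h3
        simpa using h5
    · rintro ⟨j, hj, hjS⟩
      by_cases hj0 : 1 ≤ j
      · refine ⟨j-1, by omega, ?_⟩
        have : (T ^ ((j-1:ℕ):ℤ)) (T x) = (T ^ (j:ℤ)) x := by
          rw [show ((j:ℤ)) = ((j-1:ℕ):ℤ) + 1 by push_cast; omega, zpow_add_apply, zpow_one]
        rw [this]
        exact hjS
      · -- j = 0 : use x ∈ S hence T^(2d) x ∈ S hence T^(dn - 1) (T x) ∈ S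
        have hj0' : j = 0 := by omega
        rw [hj0'] at hjS
        simp only [Nat.cast_zero, zpow_zero, Equiv.Perm.coe_one, id_eq] at hjS
        refine ⟨dn - 1, by omega, ?_⟩
        have h3 : (T ^ (2*d)) x ∈ S := (hSper x).mpr hjS
        have : (T ^ (((dn-1:ℕ)):ℤ)) (T x) = (T ^ (2*d)) x := by
          rw [show ((2*d : ℤ)) = ((dn-1:ℕ):ℤ) + 1 by push_cast; omega, zpow_add_apply, zpow_one]
        rw [this]
        exact h3
  -- ergodicity: Uset has measure 1
  have hU01 := hT.toPreErgodic.ae_empty_or_univ hUmeas hUinv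
  have hUS : S ⊆ Uset := by
    intro x hx
    rw [hmem]
    exact ⟨0, by omega, by simpa using hx⟩
  have hU1 : μ Uset = 1 := by
    rcases hU01 with hemp | huniv
    · exfalso
      have h0 : μ Uset = 0 := by simpa using measure_congr hemp
      exact hpos (measure_mono_null hUS h0)
    · have : μ Usetᶜ = 0 := ae_eq_univ.mp huniv
      have := prob_compl_eq_zero_iff hUmeas |>.mp this
      exact this
  -- measure bound
  have hmp : MeasurePreserving (⇑T) μ μ := hT.toMeasurePreserving
  have hbound : μ Uset ≤ ∑ j ∈ Finset.range dn, μ ((⇑(T ^ (j:ℤ))) ⁻¹' S) :=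
    measure_biUnion_finset_le _ _
  have hEach : ∀ j : ℕ, μ ((⇑(T ^ (j:ℤ))) ⁻¹' S) = μ S := by
    intro j
    exact (mp_zpow hTmeas hTmeas' hmp (j:ℤ)).measure_preimage hSmeas.nullMeasurableSet
  have hsum : ∑ j ∈ Finset.range dn, μ ((⇑(T ^ (j:ℤ))) ⁻¹' S) = (dn : ℝ≥0∞) * μ S := by
    rw [Finset.sum_congr rfl (fun j _ => hEach j), Finset.sum_const, Finset.card_range,
      nsmul_eq_mul]
  have hlt : (dn : ℝ≥0∞) * μ S < 1 := by
    have h1 : (dn : ℝ≥0∞) * μ S < (dn : ℝ≥0∞) * ((dn : ℕ) : ℝ≥0∞)⁻¹ := by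
      rw [ENNReal.mul_lt_mul_iff_right (by exact_mod_cast (by omega : dn ≠ 0)) (by simp)]
      exact hsmall
    have h2 : (dn : ℝ≥0∞) * ((dn : ℕ) : ℝ≥0∞)⁻¹ = 1 := by
      apply ENNReal.mul_inv_cancel
      · exact_mod_cast (by omega : dn ≠ 0)
      · simp
    rwa [h2] at h1
  rw [hU1, hsum] at hbound
  exact absurd (lt_of_le_of_lt hbound hlt) (lt_irrefl 1)

lemma FS_neg (T : Equiv.Perm X) (f : X → ℝ) (x : X) (a : ℤ) :
    FS T (fun y => -f y) x a = -FS T f x a := by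
  unfold FS
  split_ifs with h
  · rw [← Finset.sum_neg_distrib]
  · rw [← Finset.sum_neg_distrib]; ring_nf

lemma f_bounded_above {μ : Measure X} [IsProbabilityMeasure μ] {T : Equiv.Perm X}
    (hTmeas : Measurable (⇑T)) (hTmeas' : Measurable (⇑T.symm)) (hT : Ergodic (⇑T) μ)
    {f : X → ℝ} (hf : Measurable f)
    {d : ℤ} {K : ℝ} (hd : 1 ≤ d) (hK : 0 ≤ K)
    (hML : ∀ᵐ x ∂μ, ∀ t a : ℤ, |FS T f x a - FS T f x (a + 2*d*t)| ≤ K) :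
    ∃ M : ℝ, ∀ᵐ x ∂μ, f x ≤ M := by
  classical
  -- step A : a.e. the value of f along the orbit of T^(2d) moves by at most 2K
  have hstepA : ∀ᵐ x ∂μ, ∀ t : ℤ, |f x - f ((T ^ (2*d*t)) x)| ≤ 2*K := by
    filter_upwards [hML] with x hx t
    have h0 := hx t 0
    rw [FS_zero, zero_add, zero_sub, abs_neg] at h0
    have h1 := hx t 1
    rw [FS_one] at h1
    have h2 : f ((T ^ (2*d*t)) x) = FS T f x (2*d*t+1) - FS T f x (2*d*t) :=
      (FS_single T f x (2*d*t)).symm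
    have h3 : f x - f ((T ^ (2*d*t)) x)
        = (f x - FS T f x (1 + 2*d*t)) + FS T f x (2*d*t) := by
      rw [h2, show (1 + 2*d*t) = 2*d*t+1 from by ring]; ring
    rw [h3]
    calc |(f x - FS T f x (1 + 2*d*t)) + FS T f x (2*d*t)|
        ≤ |f x - FS T f x (1 + 2*d*t)| + |FS T f x (2*d*t)| := abs_add_le _ _
      _ ≤ K + K := add_le_add h1 h0
      _ = 2*K := by ring
  -- step B : find a quantile
  set Sn : ℕ → Set X := fun n => {x | (n:ℝ) < f x} with hSn
  have hSnmeas : ∀ n, MeasurableSet (Sn n) := fun n => measurableSet_lt measurable_const hf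
  have hSnanti : Antitone Sn := by
    intro n m hnm x hx
    have : (n:ℝ) ≤ (m:ℝ) := by exact_mod_cast hnm
    exact lt_of_le_of_lt this hx
  have hSninter : ⋂ n, Sn n = ∅ := by
    ext x
    simp only [Set.mem_iInter, Set.mem_empty_iff_false, iff_false, not_forall]
    obtain ⟨n, hn⟩ := exists_nat_gt (f x)
    exact ⟨n, by simp [hSn]; linarith⟩
  have htend : Tendsto (fun n => μ (Sn n)) atTop (𝓝 0) := by
    have h := MeasureTheory.tendsto_measure_iInter_atTop
      (fun n => (hSnmeas n).nullMeasurableSet) hSnanti ⟨0, measure_ne_top μ _⟩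
    rw [hSninter] at h
    simp only [measure_empty] at h; exact h
  set dn : ℕ := (2*d).toNat with hdn
  have hdnpos : (0:ℝ≥0∞) < ((dn:ℕ) : ℝ≥0∞)⁻¹ := ENNReal.inv_pos.mpr (by simp)
  obtain ⟨n₀, hn₀⟩ := (htend.eventually_lt_const hdnpos).exists
  -- step C : the invariant set
  set Sset : Set X := {x | ∀ t : ℤ, (n₀:ℝ) < f ((T ^ (2*d*t)) x)} with hSset
  have hSsetmeas : MeasurableSet Sset := by
    have : Sset = ⋂ t : ℤ, (fun x => f ((T ^ (2*d*t)) x)) ⁻¹' (Set.Ioi (n₀:ℝ)) := by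
      ext x; simp [hSset, Set.mem_iInter]
    rw [this]
    exact MeasurableSet.iInter fun t =>
      ((hf.comp (measurable_zpow T hTmeas hTmeas' (2*d*t)))) measurableSet_Ioi
  have hSsetinv : (⇑(T ^ (2*d))) ⁻¹' Sset = Sset := by
    ext x
    simp only [Set.mem_preimage, hSset, Set.mem_setOf_eq]
    constructor
    · intro h t
      have h1 := h (t-1)
      rw [← zpow_add_apply, show 2*d*(t-1) + 2*d = 2*d*t from by ring] at h1
      exact h1
    · intro h t
      have h1 := h (t+1)
      rw [← zpow_add_apply, show 2*d*t + 2*d = 2*d*(t+1) from by ring]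
      exact h1
  have hSsub : Sset ⊆ Sn n₀ := by
    intro x hx
    have := hx 0
    simpa [hSn] using this
  have hSnull : μ Sset = 0 := by
    apply small_invariant_null hTmeas hTmeas' hT hd hSsetmeas hSsetinv
    calc μ Sset ≤ μ (Sn n₀) := measure_mono hSsub
      _ < ((dn:ℕ) : ℝ≥0∞)⁻¹ := hn₀
  -- step D : conclude
  refine ⟨(n₀:ℝ) + 2*K, ?_⟩
  filter_upwards [hstepA, measure_eq_zero_iff_ae_notMem.mp hSnull] with x hx hxS
  by_contra hc
  push_neg at hc
  apply hxS
  intro t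
  have h1 := hx t
  have h2 : f x - f ((T ^ (2*d*t)) x) ≤ 2*K := le_trans (le_abs_self _) h1
  linarith

lemma f_bounded {μ : Measure X} [IsProbabilityMeasure μ] {T : Equiv.Perm X}
    (hTmeas : Measurable (⇑T)) (hTmeas' : Measurable (⇑T.symm)) (hT : Ergodic (⇑T) μ)
    {f : X → ℝ} (hf : Measurable f)
    {d : ℤ} {K : ℝ} (hd : 1 ≤ d) (hK : 0 ≤ K)
    (hML : ∀ᵐ x ∂μ, ∀ t a : ℤ, |FS T f x a - FS T f x (a + 2*d*t)| ≤ K) :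
    ∃ Mf : ℝ, 0 ≤ Mf ∧ ∀ᵐ x ∂μ, |f x| ≤ Mf := by
  obtain ⟨M₁, hM₁⟩ := f_bounded_above hTmeas hTmeas' hT hf hd hK hML
  have hMLneg : ∀ᵐ x ∂μ, ∀ t a : ℤ,
      |FS T (fun y => -f y) x a - FS T (fun y => -f y) x (a + 2*d*t)| ≤ K := by
    filter_upwards [hML] with x hx t a
    rw [FS_neg, FS_neg, show -FS T f x a - -FS T f x (a + 2*d*t)
      = -(FS T f x a - FS T f x (a + 2*d*t)) from by ring, abs_neg]
    exact hx t a
  obtain ⟨M₂, hM₂⟩ := f_bounded_above hTmeas hTmeas' hT hf.neg hd hK hMLneg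
  refine ⟨max (max M₁ M₂) 0, le_max_right _ _, ?_⟩
  filter_upwards [hM₁, hM₂] with x h1 h2
  rw [abs_le]
  constructor
  · have : -f x ≤ M₂ := h2
    have hh : -(max (max M₁ M₂) 0) ≤ -M₂ := by
      apply neg_le_neg
      exact le_trans (le_max_right M₁ M₂) (le_max_left _ _)
    linarith
  · exact le_trans h1 (le_trans (le_max_left M₁ M₂) (le_max_left _ _))


/-- bound for all the one-sided partial sums -/
lemma FB {μ : Measure X} [IsProbabilityMeasure μ] {T : Equiv.Perm X} {f : X → ℝ}
    {d : ℤ} {K Mf : ℝ} (hd : 1 ≤ d) (hMf : 0 ≤ Mf)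
    (hML : ∀ᵐ x ∂μ, ∀ t a : ℤ, |FS T f x a - FS T f x (a + 2*d*t)| ≤ K)
    (hforb : ∀ᵐ x ∂μ, ∀ i : ℤ, |f ((T ^ i) x)| ≤ Mf) :
    ∀ᵐ x ∂μ, ∀ m : ℕ, |FS T f x (m:ℤ)| ≤ K + 2*(d:ℝ)*Mf := by
  filter_upwards [hML, hforb] with x h1 h2 m
  set t : ℤ := (m:ℤ) / (2*d) with ht
  set j : ℤ := (m:ℤ) % (2*d) with hj
  have hd0 : (0:ℤ) < 2*d := by omega
  have hj0 : 0 ≤ j := Int.emod_nonneg _ (by omega)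
  have hjlt : j < 2*d := Int.emod_lt_of_pos _ hd0
  have hm : (m:ℤ) = j + 2*d*t := by
    have := Int.mul_ediv_add_emod (m:ℤ) (2*d)
    rw [← ht, ← hj] at this
    linarith
  have e1 : |FS T f x j - FS T f x (j + 2*d*t)| ≤ K := h1 t j
  have e2 : |FS T f x j| ≤ 2*(d:ℝ)*Mf := by
    have h3 : FS T f x j = ∑ i ∈ Finset.Ico (0:ℤ) j, f ((T ^ i) x) := by
      have := FS_sub T f x hj0
      rw [FS_zero] at this
      linarith
    rw [h3]
    calc |∑ i ∈ Finset.Ico (0:ℤ) j, f ((T ^ i) x)|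
        ≤ ∑ i ∈ Finset.Ico (0:ℤ) j, |f ((T ^ i) x)| := Finset.abs_sum_le_sum_abs _ _
      _ ≤ (Finset.Ico (0:ℤ) j).card • Mf :=
          Finset.sum_le_card_nsmul _ _ _ (fun i _ => h2 i)
      _ = ((Finset.Ico (0:ℤ) j).card : ℝ) * Mf := nsmul_eq_mul _ _
      _ ≤ 2*(d:ℝ)*Mf := by
          apply mul_le_mul_of_nonneg_right _ hMf
          rw [Int.card_Ico]
          have hcast : (((j - 0).toNat : ℤ) : ℝ) ≤ ((2*d : ℤ) : ℝ) := by
            have h5 : ((j-0).toNat : ℤ) = j := by omega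
            rw [h5]
            exact_mod_cast hjlt.le
          push_cast at hcast ⊢
          linarith
  have e3 : FS T f x (m:ℤ) = FS T f x (j + 2*d*t) := by rw [← hm]
  rw [e3]
  calc |FS T f x (j + 2*d*t)|
      = |(FS T f x (j + 2*d*t) - FS T f x j) + FS T f x j| := by ring_nf
    _ ≤ |FS T f x (j + 2*d*t) - FS T f x j| + |FS T f x j| := abs_add_le _ _
    _ ≤ K + 2*(d:ℝ)*Mf := by
        rw [abs_sub_comm] at e1
        exact add_le_add e1 e2

lemma FS_shift (T : Equiv.Perm X) (f : X → ℝ) (x : X) (m : ℕ) :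
    FS T f (T x) (m:ℤ) = FS T f x ((m:ℤ)+1) - f x := by
  have h1 : FS T f x ((m:ℤ)+1) - FS T f x 1 = ∑ i ∈ Finset.Ico (1:ℤ) ((m:ℤ)+1), f ((T ^ i) x) :=
    FS_sub T f x (by omega)
  have h2 : FS T f (T x) (m:ℤ) - FS T f (T x) 0
      = ∑ i ∈ Finset.Ico (0:ℤ) (m:ℤ), f ((T ^ i) (T x)) := FS_sub T f (T x) (by omega)
  rw [FS_zero, sub_zero] at h2
  have h3 : ∑ i ∈ Finset.Ico (0:ℤ) (m:ℤ), f ((T ^ i) (T x))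
      = ∑ i ∈ Finset.Ico (1:ℤ) ((m:ℤ)+1), f ((T ^ i) x) := by
    refine Finset.sum_nbij' (fun i => i + 1) (fun i => i - 1) ?_ ?_ ?_ ?_ ?_
    · intro i hi
      simp only [Finset.mem_Ico] at hi ⊢
      omega
    · intro i hi
      simp only [Finset.mem_Ico] at hi ⊢
      omega
    · intro i _; ring
    · intro i _; ring
    · intro i _
      rw [zpow_add_apply T i 1 x, zpow_one]
  rw [h2, h3, ← h1, FS_one]

lemma transfer {μ : Measure X} [IsProbabilityMeasure μ] {T : Equiv.Perm X}
    (hTmeas : Measurable (⇑T)) (hTmeas' : Measurable (⇑T.symm)) (hT : Ergodic (⇑T) μ)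
    {f : X → ℝ} (hf : Measurable f) {K₅ : ℝ} (hK₅ : 0 ≤ K₅)
    (hFB : ∀ᵐ x ∂μ, ∀ m : ℕ, |FS T f x (m:ℤ)| ≤ K₅) :
    ∃ g : X → ℝ, Measurable g ∧ (∃ C : ℝ, ∀ x, |g x| ≤ C) ∧
      ∀ᵐ x ∂μ, f x = g x - g (T x) := by
  classical
  set g₀ : X → ℝ := fun x => limsup (fun m : ℕ => FS T f x (m:ℤ)) atTop with hg₀
  have hg₀meas : Measurable g₀ :=
    Measurable.limsup (fun m => measurable_FS T hTmeas hTmeas' hf (m:ℤ))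
  set g : X → ℝ := fun x => max (-K₅) (min K₅ (g₀ x)) with hg
  have hgmeas : Measurable g := measurable_const.max (measurable_const.min hg₀meas)
  have hgbd : ∀ x, |g x| ≤ K₅ := by
    intro x
    rw [abs_le]
    refine ⟨le_max_left _ _, ?_⟩
    apply max_le (by linarith)
    exact min_le_left _ _
  -- pointwise facts
  have keybd : ∀ x, (∀ m : ℕ, |FS T f x (m:ℤ)| ≤ K₅) → |g₀ x| ≤ K₅ := by
    intro x hx
    have hbdd : IsBoundedUnder (· ≤ ·) atTop (fun m : ℕ => FS T f x (m:ℤ)) :=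
      isBoundedUnder_of ⟨K₅, fun m => le_trans (le_abs_self _) (hx m)⟩
    have hbdd2 : IsBoundedUnder (· ≥ ·) atTop (fun m : ℕ => FS T f x (m:ℤ)) :=
      isBoundedUnder_of ⟨-K₅, fun m => neg_le_of_abs_le (hx m)⟩
    rw [abs_le]
    constructor
    · refine le_limsup_of_frequently_le ?_ hbdd
      exact Eventually.frequently (Eventually.of_forall fun m => neg_le_of_abs_le (hx m))
    · exact limsup_le_of_le hbdd2.isCoboundedUnder_le
        (Eventually.of_forall fun m => le_trans (le_abs_self _) (hx m))
  have key : ∀ x, (∀ m : ℕ, |FS T f x (m:ℤ)| ≤ K₅) → g₀ (T x) = g₀ x - f x := by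
    intro x hx
    have hbdd : IsBoundedUnder (· ≤ ·) atTop (fun m : ℕ => FS T f x ((m:ℤ)+1)) := by
      apply isBoundedUnder_of
      refine ⟨K₅, fun m => le_trans (le_abs_self _) ?_⟩
      have := hx (m+1)
      rwa [show (((m+1:ℕ)):ℤ) = (m:ℤ)+1 from by push_cast; ring] at this
    have hbdd2 : IsBoundedUnder (· ≥ ·) atTop (fun m : ℕ => FS T f x ((m:ℤ)+1)) := by
      apply isBoundedUnder_of
      refine ⟨-K₅, fun m => neg_le_of_abs_le ?_⟩
      have := hx (m+1)
      rwa [show (((m+1:ℕ)):ℤ) = (m:ℤ)+1 from by push_cast; ring] at this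
    have hshift : limsup (fun m : ℕ => FS T f x ((m:ℤ)+1)) atTop
        = limsup (fun m : ℕ => FS T f x (m:ℤ)) atTop := by
      have hcomp : (fun m : ℕ => FS T f x ((m:ℤ)+1))
          = (fun m : ℕ => FS T f x ((m+1 : ℕ):ℤ)) := by
        funext m
        norm_cast
      rw [hcomp]
      exact limsup_nat_add (fun m : ℕ => FS T f x (m:ℤ)) 1
    have hfun : (fun m : ℕ => FS T f (T x) (m:ℤ))
        = fun m : ℕ => FS T f x ((m:ℤ)+1) + (- f x) := by
      funext m
      rw [FS_shift]
      ring
    have final : limsup (fun m : ℕ => FS T f (T x) (m:ℤ)) atTop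
        = limsup (fun m : ℕ => FS T f x (m:ℤ)) atTop - f x := by
      rw [hfun, limsup_add_const atTop _ _ hbdd hbdd2.isCoboundedUnder_le, hshift]
      ring
    exact final
  -- transfer the a.e. property to T x
  have hPmeas : MeasurableSet {x | ¬ ∀ m : ℕ, |FS T f x (m:ℤ)| ≤ K₅} := by
    have h1 : {x | ∀ m : ℕ, |FS T f x (m:ℤ)| ≤ K₅}
        = ⋂ m : ℕ, (fun x => |FS T f x (m:ℤ)|) ⁻¹' (Set.Iic K₅) := by
      ext x; simp [Set.mem_iInter]
    have h2 : MeasurableSet {x | ∀ m : ℕ, |FS T f x (m:ℤ)| ≤ K₅} := by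
      rw [h1]
      exact MeasurableSet.iInter fun m =>
        ((measurable_FS T hTmeas hTmeas' hf (m:ℤ)).abs) measurableSet_Iic
    have h3 : {x | ¬ ∀ m : ℕ, |FS T f x (m:ℤ)| ≤ K₅}
        = {x | ∀ m : ℕ, |FS T f x (m:ℤ)| ≤ K₅}ᶜ := rfl
    rw [h3]
    exact h2.compl
  have hTP : ∀ᵐ x ∂μ, ∀ m : ℕ, |FS T f (T x) (m:ℤ)| ≤ K₅ := by
    have h0 : μ {x | ¬ ∀ m : ℕ, |FS T f x (m:ℤ)| ≤ K₅} = 0 := by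
      rw [← MeasureTheory.ae_iff]
      exact hFB
    have h1 : μ (⇑T ⁻¹' {x | ¬ ∀ m : ℕ, |FS T f x (m:ℤ)| ≤ K₅}) = 0 := by
      rw [hT.toMeasurePreserving.measure_preimage hPmeas.nullMeasurableSet]
      exact h0
    rw [MeasureTheory.ae_iff]
    exact h1
  refine ⟨g, hgmeas, ⟨K₅, hgbd⟩, ?_⟩
  filter_upwards [hFB, hTP] with x hx hxT
  have e0 : ∀ y : X, (∀ m : ℕ, |FS T f y (m:ℤ)| ≤ K₅) → g y = g₀ y := by
    intro y hy
    obtain ⟨hl, hr⟩ := abs_le.mp (keybd y hy)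
    rw [hg]
    simp only
    rw [min_eq_right hr, max_eq_right hl]
  rw [e0 x hx, e0 (T x) hxT, key x hx]
  ring


end Prop4Aux

open Prop4Aux in
/-- **Proposition 4.** Let `f` be a finite measurable function on an ergodic
invertible probability-preserving system `(X, μ, T)`. If
`sup_{n≥0} |∑_{i=-n}^n f ∘ T^i| < +∞` almost everywhere on a set of positive
measure, then there exists a bounded measurable function `g` such that
`f = g - g ∘ T` almost everywhere. -/
theorem proposition4_bounded_bilateral_sums_implies_bounded_coboundary
    {X : Type*} [MeasurableSpace X] (μ : Measure X) [IsProbabilityMeasure μ]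
    (T : Equiv.Perm X) (hTmeas : Measurable (⇑T)) (hTmeas' : Measurable (⇑T.symm))
    (hT : Ergodic (⇑T) μ)
    (f : X → ℝ) (hf : Measurable f)
    (hpos : 0 < μ {x | BddAbove (Set.range fun n : ℕ =>
      |∑ i ∈ Finset.Icc (-(n : ℤ)) (n : ℤ), f ((T ^ i) x)|)}) :
    ∃ g : X → ℝ, Measurable g ∧ (∃ C : ℝ, ∀ x, |g x| ≤ C) ∧
      ∀ᵐ x ∂μ, f x = g x - g (T x) := by
  classical
  obtain ⟨C, A, hC, hAmeas, hApos, hAbound⟩ := exists_CA hTmeas hTmeas' hf hpos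
  obtain ⟨d, K, hd, hK, hML⟩ := master hTmeas hTmeas' hT hAmeas hApos hC hAbound
  obtain ⟨Mf, hMf, hMfae⟩ := f_bounded hTmeas hTmeas' hT hf hd hK hML
  have hforb : ∀ᵐ x ∂μ, ∀ i : ℤ, |f ((T ^ i) x)| ≤ Mf := by
    rw [MeasureTheory.ae_all_iff]
    intro i
    have hmeasN : MeasurableSet {y : X | ¬ |f y| ≤ Mf} :=
      ((hf.abs measurableSet_Iic :
        MeasurableSet {y : X | |f y| ≤ Mf})).compl
    have h0 : μ {y : X | ¬ |f y| ≤ Mf} = 0 := by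
      rw [← MeasureTheory.ae_iff]
      exact hMfae
    have h1 : μ ((⇑(T ^ i)) ⁻¹' {y : X | ¬ |f y| ≤ Mf}) = 0 := by
      rw [(mp_zpow hTmeas hTmeas' hT.toMeasurePreserving i).measure_preimage
        hmeasN.nullMeasurableSet]
      exact h0
    rw [MeasureTheory.ae_iff]
    exact h1
  have hFB := FB hd hMf hML hforb
  have hK₅ : 0 ≤ K + 2*(d:ℝ)*Mf := by
    have hd' : (1:ℝ) ≤ (d:ℝ) := by exact_mod_cast hd
    nlinarith
  exact transfer hTmeas hTmeas' hT hf hK₅ hFB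
end

section
/- Let f be a measurable function on an ergodic invertible dynamical system (X, 𝒳, μ, T). The set of points x for which the strict inequality f(T^{-n}x) < f(T^n x) holds for all n large enough is negligible, that is, μ[⋃_{N>0} ⋂_{n>N} {x : f(T^{-n}x) < f(T^n x)}] = 0. -/
open MeasureTheory Filter Topology
open scoped ENNReal

/-- **Theorem 5.** Let `f` be a measurable function on an ergodic invertible
probability-preserving system `(X, μ, T)`. The set of points `x` for which the
strict inequality `f(T^{-n} x) < f(T^n x)` holds for all `n` large enough is
negligible: `μ (⋃_{N>0} ⋂_{n>N} {f ∘ T^{-n} < f ∘ T^n}) = 0`. -/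
theorem theorem5_no_ultimate_strict_inequality
    {X : Type*} [MeasurableSpace X] (μ : Measure X) [IsProbabilityMeasure μ]
    (T : Equiv.Perm X) (hTmeas : Measurable (⇑T)) (hTmeas' : Measurable (⇑T.symm))
    (hT : Ergodic (⇑T) μ)
    (f : X → ℝ) (hf : Measurable f) :
    μ {x | ∃ N : ℕ, ∀ n > N, f ((T⁻¹ ^ n) x) < f ((T ^ n) x)} = 0 := by
  classical
  by_contra hpos
  -- measurability and measure-preservation of the powers of `T`
  have hpowsucc : ∀ m : ℕ, ⇑(T ^ (m + 1)) = ⇑(T ^ m) ∘ ⇑T := by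
    intro m; funext y; rw [pow_succ]; exact Equiv.Perm.mul_apply _ _ _
  have hpowsucc' : ∀ m : ℕ, ⇑(T⁻¹ ^ (m + 1)) = ⇑(T⁻¹ ^ m) ∘ ⇑T⁻¹ := by
    intro m; funext y; rw [pow_succ]; exact Equiv.Perm.mul_apply _ _ _
  have hTinvmeas : Measurable (⇑(T⁻¹ : Equiv.Perm X)) := by
    rw [Equiv.Perm.inv_def]; exact hTmeas'
  have hpow : ∀ m : ℕ, Measurable (⇑(T ^ m)) := by
    intro m
    induction m with
    | zero => simpa using measurable_id
    | succ k ih => rw [hpowsucc k]; exact ih.comp hTmeas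
  have hpow' : ∀ m : ℕ, Measurable (⇑(T⁻¹ ^ m)) := by
    intro m
    induction m with
    | zero => simpa using measurable_id
    | succ k ih => rw [hpowsucc' k]; exact ih.comp hTinvmeas
  have hmp : ∀ m : ℕ, MeasurePreserving (⇑(T ^ m)) μ μ := by
    intro m
    induction m with
    | zero => simpa using MeasurePreserving.id μ
    | succ k ih => rw [hpowsucc k]; exact ih.comp hT.toMeasurePreserving
  -- the sets A N
  set A : ℕ → Set X := fun N => {z | ∀ m, N < m → f ((T⁻¹ ^ m) z) < f ((T ^ m) z)} with hAdef
  have hAmeas : ∀ N, MeasurableSet (A N) := by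
    intro N
    have : A N = ⋂ (m : ℕ), ⋂ (_ : N < m), {z | f ((T⁻¹ ^ m) z) < f ((T ^ m) z)} := by
      ext z; simp [hAdef, Set.mem_iInter]
    rw [this]
    exact MeasurableSet.iInter fun m => MeasurableSet.iInter fun _ =>
      measurableSet_lt (hf.comp (hpow' m)) (hf.comp (hpow m))
  -- some A N has positive measure
  have hSU : {x | ∃ N : ℕ, ∀ n > N, f ((T⁻¹ ^ n) x) < f ((T ^ n) x)} = ⋃ N, A N := by
    ext z; simp [hAdef, gt_iff_lt]
  obtain ⟨N, hN⟩ : ∃ N, μ (A N) ≠ 0 := by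
    by_contra h
    push_neg at h
    exact hpos (by rw [hSU]; exact measure_iUnion_null h)
  set n : ℕ := N + 1 with hn
  -- refine to rational gaps
  set P := {p : ℚ × ℚ // (p.1 : ℝ) < (p.2 : ℝ)} with hPdef
  set Yf : P → Set X := fun p =>
    A N ∩ ({z | f ((T⁻¹ ^ n) z) < (p.1.1 : ℝ)} ∩ {z | (p.1.2 : ℝ) < f ((T ^ n) z)}) with hYfdef
  have hYfmeas : ∀ p, MeasurableSet (Yf p) := by
    intro p
    exact (hAmeas N).inter ((measurableSet_lt (hf.comp (hpow' n)) measurable_const).inter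
      (measurableSet_lt measurable_const (hf.comp (hpow n))))
  have hcover : A N ⊆ ⋃ p, Yf p := by
    intro z hz
    have h1 : f ((T⁻¹ ^ n) z) < f ((T ^ n) z) := hz n (Nat.lt_succ_self N)
    obtain ⟨q, hq1, hq2⟩ := exists_rat_btwn h1
    obtain ⟨r, hr1, hr2⟩ := exists_rat_btwn hq2
    exact Set.mem_iUnion.2 ⟨⟨(q, r), hr1⟩, hz, hq1, hr2⟩
  obtain ⟨p, hp⟩ : ∃ p : P, μ (Yf p) ≠ 0 := by
    by_contra h
    push_neg at h
    exact hN (measure_mono_null hcover (measure_iUnion_null h))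
  set Y : Set X := Yf p with hYdef
  have hYmeas : MeasurableSet Y := hYfmeas p
  set q : ℚ := p.1.1 with hq
  set r : ℚ := p.1.2 with hr
  have hqr : (q : ℝ) < (r : ℝ) := p.2
  -- the density
  set c : ℝ≥0∞ := μ Y with hc
  have hctop : c ≠ ⊤ := measure_ne_top μ Y
  set γ : ℝ := c.toReal with hγdef
  have hγpos : 0 < γ := ENNReal.toReal_pos hp hctop
  set K : ℕ := 2 * n with hK
  have hKpos : 0 < K := by omega
  -- choose the Roth window M
  have hlo := rothNumberNat_isLittleO_id
  have h4 : (0 : ℝ) < γ / 4 := by positivity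
  obtain ⟨M, hM1, hM2⟩ := ((hlo.def h4).and (eventually_ge_atTop ⌈4 / γ⌉₊)).exists
  have hM1' : (rothNumberNat M : ℝ) ≤ γ / 4 * M := by
    simpa [Real.norm_natCast] using hM1
  have hM2' : (4 / γ : ℝ) ≤ M := Nat.ceil_le.1 hM2
  have hMγ : (1 : ℝ) ≤ γ / 4 * M := by
    have : γ / 4 * (4 / γ) = 1 := by field_simp
    nlinarith
  have hkeyR : ((K * (rothNumberNat M + 1) : ℕ) : ℝ) ≤ γ * ((K * M : ℕ) : ℝ) := by
    have h1 : (rothNumberNat M : ℝ) + 1 ≤ γ * M := by nlinarith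
    have hK0 : (0 : ℝ) ≤ (K : ℝ) := by positivity
    push_cast
    nlinarith
  set m₀ : ℕ := K * (rothNumberNat M + 1) with hm₀
  have hm₀pos : 1 ≤ m₀ := Nat.mul_pos hKpos (Nat.succ_pos (rothNumberNat M))
  have hm₀c : (m₀ : ℝ≥0∞) ≤ ((K * M : ℕ) : ℝ≥0∞) * c := by
    have hcγ : c = ENNReal.ofReal γ := (ENNReal.ofReal_toReal hctop).symm
    rw [hcγ, ← ENNReal.ofReal_natCast m₀, ← ENNReal.ofReal_natCast (K * M),
      ← ENNReal.ofReal_mul (by positivity)]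
    exact ENNReal.ofReal_le_ofReal (by rw [mul_comm]; exact hkeyR)
  -- visit counts
  set V : X → Finset ℕ := fun z => (Finset.range (K * M)).filter (fun j => (T ^ j) z ∈ Y)
    with hVdef
  have hint : ∫⁻ z, ((V z).card : ℝ≥0∞) ∂μ = ((K * M : ℕ) : ℝ≥0∞) * c := by
    have heq : ∀ z, ((V z).card : ℝ≥0∞) =
        ∑ j ∈ Finset.range (K * M),
          Set.indicator ((⇑(T ^ j)) ⁻¹' Y) (fun _ => (1 : ℝ≥0∞)) z := by
      intro z
      rw [hVdef, Finset.card_filter, Nat.cast_sum]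
      refine Finset.sum_congr rfl fun j _ => ?_
      rw [Set.indicator_apply]
      by_cases hzj : (T ^ j) z ∈ Y <;> simp [hzj, Set.mem_preimage]
    calc ∫⁻ z, ((V z).card : ℝ≥0∞) ∂μ
        = ∑ j ∈ Finset.range (K * M),
            ∫⁻ z, Set.indicator ((⇑(T ^ j)) ⁻¹' Y) (fun _ => (1 : ℝ≥0∞)) z ∂μ := by
          simp_rw [heq]
          exact lintegral_finset_sum _
            (fun j _ => measurable_const.indicator ((hpow j) hYmeas))
      _ = ∑ j ∈ Finset.range (K * M), μ ((⇑(T ^ j)) ⁻¹' Y) := by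
          refine Finset.sum_congr rfl fun j _ => ?_
          exact lintegral_indicator_one ((hpow j) hYmeas)
      _ = ∑ j ∈ Finset.range (K * M), c := by
          refine Finset.sum_congr rfl fun j _ => ?_
          exact (hmp j).measure_preimage hYmeas.nullMeasurableSet
      _ = ((K * M : ℕ) : ℝ≥0∞) * c := by
          rw [Finset.sum_const, Finset.card_range, nsmul_eq_mul]
  -- a point with many visits
  obtain ⟨x, hx⟩ : ∃ z, m₀ ≤ (V z).card := by
    by_contra h
    push_neg at h
    have hub : ∀ z, ((V z).card : ℝ≥0∞) ≤ ((m₀ - 1 : ℕ) : ℝ≥0∞) := by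
      intro z
      exact Nat.cast_le.2 (Nat.le_pred_of_lt (h z))
    have hle : ((K * M : ℕ) : ℝ≥0∞) * c ≤ ((m₀ - 1 : ℕ) : ℝ≥0∞) := by
      rw [← hint]
      calc ∫⁻ z, ((V z).card : ℝ≥0∞) ∂μ ≤ ∫⁻ _, ((m₀ - 1 : ℕ) : ℝ≥0∞) ∂μ :=
            lintegral_mono hub
        _ = ((m₀ - 1 : ℕ) : ℝ≥0∞) := by simp
    have : (m₀ : ℝ≥0∞) ≤ ((m₀ - 1 : ℕ) : ℝ≥0∞) := le_trans hm₀c hle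
    have : m₀ ≤ m₀ - 1 := by exact_mod_cast this
    omega
  -- pigeonhole into congruence classes mod K
  have hmaps : ∀ v ∈ V x, v % K ∈ Finset.range K :=
    fun v _ => Finset.mem_range.2 (Nat.mod_lt _ hKpos)
  have hcard : (Finset.range K).card * (rothNumberNat M + 1) ≤ (V x).card := by
    rw [Finset.card_range]; exact hx
  obtain ⟨r0, _, hr0⟩ := Finset.exists_le_card_fiber_of_mul_le_card_of_maps_to hmaps
    ⟨0, Finset.mem_range.2 hKpos⟩ hcard
  set F : Finset ℕ := (V x).filter (fun v => v % K = r0) with hF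
  set B : Finset ℕ := F.image (fun v => v / K) with hB
  have hBF : B.card = F.card := by
    rw [hB]
    refine Finset.card_image_of_injOn ?_
    intro v1 h1 v2 h2 hdiv
    have hdiv' : v1 / K = v2 / K := hdiv
    have e1 : v1 % K = r0 := (Finset.mem_filter.1 (Finset.mem_coe.1 h1)).2
    have e2 : v2 % K = r0 := (Finset.mem_filter.1 (Finset.mem_coe.1 h2)).2
    have d1 := Nat.div_add_mod v1 K
    have d2 := Nat.div_add_mod v2 K
    rw [e1] at d1; rw [e2] at d2
    rw [← d1, ← d2, hdiv']
  have hBsub : ∀ b ∈ B, b < M := by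
    intro b hb
    obtain ⟨v, hvF, rfl⟩ := Finset.mem_image.1 hb
    have hvV : v ∈ V x := (Finset.mem_filter.1 hvF).1
    have : v < K * M := Finset.mem_range.1 (Finset.mem_filter.1 hvV).1
    exact (Nat.div_lt_iff_lt_mul hKpos).2 (by rwa [Nat.mul_comm M K])
  have hvis : ∀ j ∈ B, (T ^ (K * j + r0)) x ∈ Y := by
    intro j hj
    obtain ⟨v, hvF, rfl⟩ := Finset.mem_image.1 hj
    have e1 : v % K = r0 := (Finset.mem_filter.1 hvF).2
    have hvV : v ∈ V x := (Finset.mem_filter.1 hvF).1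
    have hvY : (T ^ v) x ∈ Y := (Finset.mem_filter.1 hvV).2
    have : K * (v / K) + r0 = v := by rw [← e1]; exact Nat.div_add_mod v K
    rwa [this]
  -- B is too big to be 3AP-free
  have hnotfree : ¬ ThreeAPFree (B : Set ℕ) := by
    intro h3
    have := ThreeAPFree.le_rothNumberNat B h3 hBsub rfl
    omega
  -- main pointwise contradiction from a 3-AP of visits
  have main : ∀ a b d : ℕ, a ∈ B → b ∈ B → d ∈ B → a + d = b + b → a < b → False := by
    intro a b d ha hb hd habd hab
    set s : ℕ := b - a with hs
    have hs1 : 1 ≤ s := by omega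
    have hbs : b = a + s := by omega
    have hds : d = a + (s + s) := by omega
    set t : ℕ := K * s with ht
    have htK : K ≤ t := Nat.le_mul_of_pos_right K (by omega)
    set m1 : ℕ := t - n with hm1
    have hNm1 : N < m1 := by omega
    have hnm1t : n + m1 = t := by omega
    set v0 : ℕ := K * a + r0 with hv0
    set v1 : ℕ := K * b + r0 with hv1
    set v2 : ℕ := K * d + r0 with hv2
    have hKb : K * b = K * a + t := by rw [hbs, Nat.mul_add, ht]
    have hKd : K * d = K * a + (t + t) := by
      rw [hds, Nat.mul_add, Nat.mul_add, ht]
    have hv1v0 : v1 = m1 + (n + v0) := by omega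
    have hv2v1 : v2 = n + (m1 + v1) := by omega
    have hz0 := hvis a ha
    have hz1 := hvis b hb
    have hz2 := hvis d hd
    rw [show K * a + r0 = v0 from rfl] at hz0
    rw [show K * b + r0 = v1 from rfl] at hz1
    rw [show K * d + r0 = v2 from rfl] at hz2
    have hz1A : (T ^ v1) x ∈ A N := hz1.1
    have key : f ((T⁻¹ ^ m1) ((T ^ v1) x)) < f ((T ^ m1) ((T ^ v1) x)) := hz1A m1 hNm1
    have eq1 : (T⁻¹ ^ m1) ((T ^ v1) x) = (T ^ n) ((T ^ v0) x) := by
      rw [hv1v0, pow_add T m1 (n + v0), Equiv.Perm.mul_apply, inv_pow T m1,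
        Equiv.Perm.inv_def, Equiv.symm_apply_apply, pow_add T n v0, Equiv.Perm.mul_apply]
    have eq2 : (T⁻¹ ^ n) ((T ^ v2) x) = (T ^ m1) ((T ^ v1) x) := by
      rw [hv2v1, pow_add T n (m1 + v1), Equiv.Perm.mul_apply, inv_pow T n,
        Equiv.Perm.inv_def, Equiv.symm_apply_apply, pow_add T m1 v1, Equiv.Perm.mul_apply]
    rw [eq1, ← eq2] at key
    have hy0 : (r : ℝ) < f ((T ^ n) ((T ^ v0) x)) := hz0.2.2
    have hy2 : f ((T⁻¹ ^ n) ((T ^ v2) x)) < (q : ℝ) := hz2.2.1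
    linarith
  -- extract the 3-AP
  rw [ThreeAPFree] at hnotfree
  push_neg at hnotfree
  obtain ⟨a, ha, b, hb, d, hd, habd, hne⟩ := hnotfree
  rcases Nat.lt_or_ge a b with hab | hab
  · exact main a b d ha hb hd habd hab
  · have hba : b < a := by omega
    exact main d b a hd hb ha (by omega) (by omega)
end

section
/- Let f be a measurable function on an ergodic invertible dynamical system (X, 𝒳, μ, T) and let q be a fixed integer. The set of points x for which the strict inequality f(T^{-n}x) < f(T^{n+q} x) holds for all n large enough is negligible, that is, μ[⋃_{N>0} ⋂_{n>N} {x : f(T^{-n}x) < f(T^{n+q} x)}] = 0. -/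
open MeasureTheory Filter Topology

open Finset in
private lemma aux_roth_extract (P : ℕ → Prop) [DecidablePred P] (m : ℕ) (hm : 0 < m)
    (δ : ℝ) (hδ : 0 < δ)
    (H : ∀ L₀ : ℕ, ∃ L, L₀ ≤ L ∧ δ * (L + 1) ≤ (((range (L + 1)).filter P).card : ℝ)) :
    ∃ a e : ℕ, 0 < e ∧ P a ∧ P (a + m * e) ∧ P (a + m * e + m * e) := by
  classical
  have hm0 : (0:ℝ) < m := by exact_mod_cast hm
  -- Step A : in each good window some residue class is rich
  have key : ∀ L₀ : ℕ, ∃ L, L₀ ≤ L ∧ ∃ r < m,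
      δ * (L + 1) / m ≤ (((range (L + 1)).filter fun k => P k ∧ k % m = r).card : ℝ) := by
    intro L₀
    obtain ⟨L, hL, hcard⟩ := H L₀
    refine ⟨L, hL, ?_⟩
    by_contra hcon
    push_neg at hcon
    have hfib : ((((range (L + 1)).filter P).card : ℝ))
        = ∑ r ∈ range m, (((range (L + 1)).filter fun k => P k ∧ k % m = r).card : ℝ) := by
      rw [card_eq_sum_card_fiberwise (f := fun k => k % m) (t := range m)
        (fun k _ => mem_range.2 (Nat.mod_lt _ hm))]
      push_cast
      exact Finset.sum_congr rfl fun r _ => by rw [filter_filter]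
    have hlt : ((((range (L + 1)).filter P).card : ℝ)) < δ * (L + 1) := by
      calc ((((range (L + 1)).filter P).card : ℝ))
          = ∑ r ∈ range m, (((range (L + 1)).filter fun k => P k ∧ k % m = r).card : ℝ) := hfib
        _ < ∑ _r ∈ range m, δ * (L + 1) / m :=
            Finset.sum_lt_sum_of_nonempty ⟨0, mem_range.2 hm⟩ fun r hr => hcon r (mem_range.1 hr)
        _ = δ * (L + 1) := by
            rw [Finset.sum_const, card_range, nsmul_eq_mul]
            field_simp
    exact absurd hcard (not_le.2 hlt)
  -- Step B : one residue r recurs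
  have keyr : ∃ r, r < m ∧ ∀ L₀ : ℕ, ∃ L, L₀ ≤ L ∧
      δ * (L + 1) / m ≤ (((range (L + 1)).filter fun k => P k ∧ k % m = r).card : ℝ) := by
    by_contra hcon
    push_neg at hcon
    choose! g hg using hcon
    obtain ⟨L, hL, r, hr, hcard⟩ := key ((range m).sup g)
    have hgr : g r ≤ L := le_trans (Finset.le_sup (mem_range.2 hr)) hL
    exact absurd hcard (not_le.2 (hg r hr L hgr))
  obtain ⟨r, hrm, hrec⟩ := keyr
  -- Step C : Roth in a rich window
  set ε : ℝ := δ / 2 with hεdef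
  have hε : 0 < ε := by positivity
  obtain ⟨L, hL, hcard⟩ := hrec (max m (m * cornersTheoremBound (ε / 3)))
  set A : Finset ℕ := (range (L + 1)).filter (fun k => P k ∧ k % m = r) with hAdef
  set A' : Finset ℕ := A.image (fun k => k / m) with hA'def
  have hmem : ∀ u ∈ A', P (m * u + r) := by
    intro u hu
    obtain ⟨k, hk, hk2⟩ := mem_image.1 hu
    have hk2' : k / m = u := hk2
    rw [hAdef, mem_filter] at hk
    have hkP : P k := hk.2.1
    have hkm : k % m = r := hk.2.2
    have hke : m * u + r = k := by
      rw [← hk2', ← hkm]; exact Nat.div_add_mod k m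
    rw [hke]
    exact hkP
  have hinj : Set.InjOn (fun k => k / m) A := by
    intro a ha b hb hab
    have ha' := Finset.mem_coe.1 ha
    have hb' := Finset.mem_coe.1 hb
    rw [hAdef, mem_filter] at ha' hb'
    have hab' : a / m = b / m := hab
    calc a = m * (a / m) + a % m := (Nat.div_add_mod a m).symm
      _ = m * (b / m) + b % m := by rw [hab', ha'.2.2, hb'.2.2]
      _ = b := Nat.div_add_mod b m
  have hcard' : A'.card = A.card := card_image_of_injOn hinj
  set n' : ℕ := L / m + 1 with hn'def
  have hsub : A' ⊆ range n' := by
    intro u hu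
    obtain ⟨k, hk, hk2⟩ := mem_image.1 hu
    have hk2' : k / m = u := hk2
    rw [hAdef, mem_filter, mem_range] at hk
    have hkL : k ≤ L := by omega
    have hdd : k / m ≤ L / m := Nat.div_le_div_right hkL
    rw [mem_range, hn'def]
    exact Nat.lt_succ_of_le (hk2' ▸ hdd)
  have hmL : m ≤ L := le_trans (le_max_left _ _) hL
  have hBL : m * cornersTheoremBound (ε / 3) ≤ L := le_trans (le_max_right _ _) hL
  have hnotfree : ¬ ThreeAPFree (A' : Set ℕ) := by
    refine roth_3ap_theorem_nat ε hε ?_ A' hsub ?_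
    · have h1 : cornersTheoremBound (ε / 3) ≤ L / m := (Nat.le_div_iff_mul_le hm).2 (by rw [Nat.mul_comm]; exact hBL)
      omega
    · rw [hcard']
      have h2 : ((L / m : ℕ) : ℝ) ≤ (L : ℝ) / m := Nat.cast_div_le
      have hLm : (m:ℝ) ≤ (L:ℝ) + 2 := by
        have : (m:ℝ) ≤ (L:ℝ) := by exact_mod_cast hmL
        linarith
      have hmain : ε * (n' : ℝ) ≤ δ * ((L:ℝ) + 1) / m := by
        have e1 : ε * (n' : ℝ) = δ / 2 * (((L / m : ℕ) : ℝ) + 1) := by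
          rw [hεdef, hn'def]; push_cast; ring
        have e2 : δ / 2 * (((L / m : ℕ) : ℝ) + 1) ≤ δ / 2 * ((L:ℝ)/m + 1) := by nlinarith
        have e3 : δ / 2 * ((L:ℝ)/m + 1) ≤ δ * ((L:ℝ) + 1) / m := by
          have lhs : δ / 2 * ((L:ℝ)/m + 1) = δ * ((L:ℝ) + m) / (2 * m) := by
            field_simp
          rw [lhs, div_le_div_iff₀ (by positivity) hm0]
          nlinarith [mul_nonneg (mul_pos hδ hm0).le (show (0:ℝ) ≤ (L:ℝ) + 2 - m by linarith)]
        linarith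
      refine le_trans hmain ?_
      have := hcard
      push_cast at this ⊢
      linarith
  have hexists : ∃ a ∈ A', ∃ b ∈ A', ∃ c ∈ A', a + c = b + b ∧ a ≠ b := by
    by_contra hcon
    push_neg at hcon
    exact hnotfree fun a ha b hb c hc habc =>
      hcon a (Finset.mem_coe.1 ha) b (Finset.mem_coe.1 hb) c (Finset.mem_coe.1 hc) habc
  obtain ⟨a, ha, b, hb, c0, hc0, habc, hab⟩ := hexists
  obtain ⟨u, hu, w, hw, huw, hub⟩ : ∃ u ∈ A', ∃ w ∈ A', u + w = b + b ∧ u < b := by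
    rcases lt_or_gt_of_ne hab with h | h
    · exact ⟨a, ha, c0, hc0, habc, h⟩
    · exact ⟨c0, hc0, a, ha, by omega, by omega⟩
  obtain ⟨e, he, hbe⟩ : ∃ e, 0 < e ∧ b = u + e := ⟨b - u, by omega, by omega⟩
  have hwe : w = u + e + e := by omega
  refine ⟨m * u + r, e, he, hmem u hu, ?_, ?_⟩
  · have h1 : m * u + r + m * e = m * (u + e) + r := by ring
    rw [h1, ← hbe]
    exact hmem b hb
  · have h2 : m * u + r + m * e + m * e = m * (u + e + e) + r := by ring
    rw [h2, ← hwe]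
    exact hmem w hw


/-- **Theorem 5 (asymmetric version).** Let `f` be a measurable function on an
ergodic invertible probability-preserving system `(X, μ, T)` and let `q` be a fixed
integer. The set of points `x` for which the strict inequality
`f(T^{-n} x) < f(T^{n+q} x)` holds for all `n` large enough is negligible:
`μ (⋃_{N>0} ⋂_{n>N} {f ∘ T^{-n} < f ∘ T^{n+q}}) = 0`. -/
theorem theorem5_no_ultimate_strict_inequality_shifted
    {X : Type*} [MeasurableSpace X] (μ : Measure X) [IsProbabilityMeasure μ]
    (T : Equiv.Perm X) (hTmeas : Measurable (⇑T)) (hTmeas' : Measurable (⇑T.symm))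
    (hT : Ergodic (⇑T) μ)
    (f : X → ℝ) (hf : Measurable f) (q : ℤ) :
    μ {x | ∃ N : ℕ, ∀ n > N, f ((T⁻¹ ^ n) x) < f ((T ^ ((n : ℤ) + q)) x)} = 0 := by
  classical
  by_contra hS
  -- measurability of integer powers of T
  have hTz : ∀ k : ℤ, Measurable ⇑(T ^ k) := by
    intro k
    match k with
    | Int.ofNat n =>
        rw [Int.ofNat_eq_coe, zpow_natCast, Equiv.Perm.coe_pow]
        exact hTmeas.iterate n
    | Int.negSucc n =>
        rw [zpow_negSucc, ← inv_pow, Equiv.Perm.inv_def, Equiv.Perm.coe_pow]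
        exact hTmeas'.iterate (n + 1)
  have hmpT : MeasurePreserving ⇑T μ μ := hT.toMeasurePreserving
  have hmpT' : MeasurePreserving ⇑T.symm μ μ := by
    let e : X ≃ᵐ X := ⟨T, hTmeas, hTmeas'⟩
    have h1 : MeasurePreserving ⇑e μ μ := hmpT
    exact h1.symm e
  have hmpk : ∀ k : ℤ, MeasurePreserving ⇑(T ^ k) μ μ := by
    intro k
    match k with
    | Int.ofNat n =>
        rw [Int.ofNat_eq_coe, zpow_natCast, Equiv.Perm.coe_pow]
        exact hmpT.iterate n
    | Int.negSucc n =>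
        rw [zpow_negSucc, ← inv_pow, Equiv.Perm.inv_def, Equiv.Perm.coe_pow]
        exact hmpT'.iterate (n + 1)
  have hTadd : ∀ (a b : ℤ) (x : X), (T ^ (a + b)) x = (T ^ a) ((T ^ b) x) := by
    intro a b x
    rw [zpow_add]
    rfl
  have hTone : ∀ (a : ℤ) (x : X), (T ^ a) (T x) = (T ^ (a + 1)) x := by
    intro a x
    have h := hTadd a 1 x
    rw [zpow_one] at h
    exact h.symm
  -- Step 1 : find N with positive measure
  have hdecomp : {x | ∃ N : ℕ, ∀ n > N, f ((T⁻¹ ^ n) x) < f ((T ^ ((n : ℤ) + q)) x)}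
      = ⋃ N : ℕ, {x | ∀ n > N, f ((T⁻¹ ^ n) x) < f ((T ^ ((n : ℤ) + q)) x)} := by
    ext x
    simp only [Set.mem_setOf_eq, Set.mem_iUnion]
  rw [hdecomp, measure_iUnion_null_iff] at hS
  push_neg at hS
  obtain ⟨N, hN⟩ := hS
  -- Step 2 : the reflection family
  set p : ℤ := q + 2 * ((N : ℤ) + 1) with hpdef
  set C : ℤ → Set X :=
    fun k => {x | ∀ j : ℤ, j ≤ k → f ((T ^ j) x) < f ((T ^ (2 * k + p - j)) x)} with hCdef
  have hCmeas : ∀ k, MeasurableSet (C k) := by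
    intro k
    have : C k = ⋂ (j : ℤ) (_ : j ≤ k), {x | f ((T ^ j) x) < f ((T ^ (2 * k + p - j)) x)} := by
      ext x
      simp only [hCdef, Set.mem_setOf_eq, Set.mem_iInter]
    rw [this]
    exact MeasurableSet.iInter fun j => MeasurableSet.iInter fun _ =>
      measurableSet_lt (hf.comp (hTz j)) (hf.comp (hTz _))
  set k₀ : ℤ := -((N : ℤ) + 1) with hk₀def
  have hk0sub : {x | ∀ n > N, f ((T⁻¹ ^ n) x) < f ((T ^ ((n : ℤ) + q)) x)} ⊆ C k₀ := by
    intro x hx j hj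
    have hjneg : 0 ≤ -j := by omega
    set n : ℕ := (-j).toNat with hndef
    have hnj : (n : ℤ) = -j := Int.toNat_of_nonneg hjneg
    have hnN : N < n := by omega
    have h1 := hx n hnN
    have e1 : (T⁻¹ ^ n : Equiv.Perm X) = T ^ j := by
      rw [inv_pow, ← zpow_natCast, ← zpow_neg]
      congr 1
      omega
    have e2 : ((n : ℤ) + q) = 2 * k₀ + p - j := by omega
    rw [e1, e2] at h1
    exact h1
  have hk0pos : μ (C k₀) ≠ 0 := fun h => hN (measure_mono_null hk0sub h)
  -- Step 3 : exact translation structure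
  have hTC : ∀ k : ℤ, ⇑T ⁻¹' C k = C (k + 1) := by
    intro k
    ext x
    simp only [hCdef, Set.mem_preimage, Set.mem_setOf_eq]
    constructor
    · intro h j hj
      have h2 := h (j - 1) (by omega)
      rw [hTone, hTone] at h2
      have e1 : j - 1 + 1 = j := by ring
      have e2 : 2 * k + p - (j - 1) + 1 = 2 * (k + 1) + p - j := by ring
      rw [e1, e2] at h2
      exact h2
    · intro h j hj
      have h2 := h (j + 1) (by omega)
      rw [hTone, hTone]
      have e1 : 2 * (k + 1) + p - (j + 1) = 2 * k + p - j + 1 := by ring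
      rw [e1] at h2
      exact h2
  have hCeq : ∀ k : ℤ, μ (C (k + 1)) = μ (C k) := by
    intro k
    rw [← hTC k]
    exact hmpT.measure_preimage (hCmeas k).nullMeasurableSet
  have hCconst : ∀ n : ℕ, μ (C (k₀ + n)) = μ (C k₀) := by
    intro n
    induction n with
    | zero => simp
    | succ n ih =>
        have e : (k₀ + ((n : ℤ) + 1)) = (k₀ + n) + 1 := by ring
        rw [show ((n + 1 : ℕ) : ℤ) = (n : ℤ) + 1 by push_cast; ring, e, hCeq, ih]
  have hC0 : μ (C 0) ≠ 0 := by
    have h := hCconst (N + 1)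
    have e : (k₀ + ((N + 1 : ℕ) : ℤ)) = 0 := by push_cast; omega
    rw [e] at h
    rw [h]
    exact hk0pos
  -- Step 4 : p ≥ 1
  have hp1 : (1 : ℤ) ≤ p := by
    by_contra hple
    push_neg at hple
    obtain ⟨x, hx⟩ := nonempty_of_measure_ne_zero hk0pos
    have h1 := hx k₀ le_rfl
    have h2 := hx (k₀ + p) (by omega)
    have e1 : 2 * k₀ + p - k₀ = k₀ + p := by ring
    have e2 : 2 * k₀ + p - (k₀ + p) = k₀ := by ring
    rw [e1] at h1
    rw [e2] at h2
    exact absurd (h1.trans h2) (lt_irrefl _)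
  -- Step 5 : a crossing level
  obtain ⟨c, hΞpos⟩ : ∃ c : ℚ,
      μ (C 0 ∩ {x | f x ≤ (c : ℝ) ∧ (c : ℝ) < f ((T ^ p) x)}) ≠ 0 := by
    by_contra hcon
    push_neg at hcon
    refine hC0 (measure_mono_null ?_ (measure_iUnion_null_iff.2 hcon))
    intro x hx
    have h0 := hx 0 le_rfl
    have e0 : (T ^ (0 : ℤ)) x = x := by rw [zpow_zero]; rfl
    have e1 : 2 * 0 + p - 0 = p := by ring
    rw [e0, e1] at h0
    obtain ⟨c, hc1, hc2⟩ := exists_rat_btwn h0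
    exact Set.mem_iUnion.2 ⟨c, hx, le_of_lt hc1, hc2⟩
  set Ξ : Set X := C 0 ∩ {x | f x ≤ (c : ℝ) ∧ (c : ℝ) < f ((T ^ p) x)} with hΞdef
  have hΞm : MeasurableSet Ξ :=
    (hCmeas 0).inter ((measurableSet_le hf measurable_const).inter
      (measurableSet_lt measurable_const (hf.comp (hTz p))))
  set θ : ENNReal := μ Ξ with hθdef
  have hθ0 : θ ≠ 0 := hΞpos
  have hθtop : θ ≠ ⊤ := measure_ne_top μ Ξ
  -- Step 6 : counting function and a density point
  set cnt : ℕ → X → ENNReal :=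
    fun L x => ∑ k ∈ Finset.range L, (⇑(T ^ (k : ℤ)) ⁻¹' Ξ).indicator 1 x with hcntdef
  have hcntmeas : ∀ L, Measurable (cnt L) := by
    intro L
    exact Finset.measurable_sum _ fun k _ =>
      measurable_const.indicator (hΞm.preimage (hTz k))
  have hcntle : ∀ (L : ℕ) (x : X), cnt L x ≤ L := by
    intro L x
    calc cnt L x ≤ ∑ _k ∈ Finset.range L, (1 : ENNReal) := by
          refine Finset.sum_le_sum fun k _ => ?_
          simp only [Set.indicator_apply]
          split <;> simp
      _ = L := by simp
  have hcint : ∀ L : ℕ, ∫⁻ x, cnt L x ∂μ = L * θ := by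
    intro L
    simp only [hcntdef]
    rw [lintegral_finset_sum (Finset.range L)
      (f := fun (k : ℕ) (x : X) => (⇑(T ^ (k : ℤ)) ⁻¹' Ξ).indicator 1 x)
      (fun k _ => measurable_const.indicator (hΞm.preimage (hTz k)))]
    have he : ∀ k ∈ Finset.range L,
        ∫⁻ x, (⇑(T ^ (k : ℤ)) ⁻¹' Ξ).indicator (1 : X → ENNReal) x ∂μ = θ := by
      intro k _
      rw [lintegral_indicator_one (hΞm.preimage (hTz k))]
      exact (hmpk k).measure_preimage hΞm.nullMeasurableSet
    rw [Finset.sum_congr rfl he, Finset.sum_const, Finset.card_range, nsmul_eq_mul]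
  set B : ℕ → Set X := fun L => {x | θ / 2 * L ≤ cnt L x} with hBdef
  have hBm : ∀ L, MeasurableSet (B L) := fun L =>
    measurableSet_le measurable_const (hcntmeas L)
  have hBμ : ∀ L : ℕ, 0 < L → θ / 2 ≤ μ (B L) := by
    intro L hL
    have hpt : ∀ x, cnt L x ≤ θ / 2 * L + (B L).indicator (fun _ => (L : ENNReal)) x := by
      intro x
      by_cases hx : x ∈ B L
      · rw [Set.indicator_of_mem hx]
        calc cnt L x ≤ L := hcntle L x
          _ ≤ θ / 2 * L + L := le_add_self
      · rw [Set.indicator_of_notMem hx, add_zero]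
        exact le_of_lt (not_le.1 hx)
    have hint := lintegral_mono (μ := μ) hpt
    rw [hcint L] at hint
    rw [lintegral_add_left measurable_const] at hint
    rw [lintegral_const] at hint
    rw [lintegral_indicator (hBm L)] at hint
    rw [setLIntegral_const] at hint
    rw [measure_univ, mul_one] at hint
    -- hint : L * θ ≤ θ/2 * L + L * μ (B L)
    have hsplit : (L : ENNReal) * θ = θ / 2 * L + θ / 2 * L := by
      calc (L : ENNReal) * θ = (θ / 2 + θ / 2) * L := by rw [ENNReal.add_halves]; ring
        _ = θ / 2 * L + θ / 2 * L := by ring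
    rw [hsplit] at hint
    have hfin : θ / 2 * L ≠ ⊤ := by
      refine ENNReal.mul_ne_top ?_ (by simp)
      exact (ENNReal.div_lt_top hθtop (by simp)).ne
    have h2 : θ / 2 * L ≤ (L : ENNReal) * μ (B L) :=
      (ENNReal.add_le_add_iff_left hfin).1 hint
    rw [mul_comm] at h2
    have hL0 : (L : ENNReal) ≠ 0 := by
      simpa using hL.ne'
    have hLt : (L : ENNReal) ≠ ⊤ := by simp
    exact (ENNReal.mul_le_mul_iff_right hL0 hLt).1 (by rw [mul_comm] at h2 ⊢; exact h2)
  set U : ℕ → Set X := fun L₀ => ⋃ (L : ℕ) (_ : L₀ ≤ L), B (L + 1) with hUdef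
  have hUanti : Antitone U := by
    intro a b hab x hx
    simp only [hUdef, Set.mem_iUnion] at hx ⊢
    obtain ⟨L, hL, h⟩ := hx
    exact ⟨L, le_trans hab hL, h⟩
  have hUμ : ∀ L₀, θ / 2 ≤ μ (U L₀) := by
    intro L₀
    refine le_trans (hBμ (L₀ + 1) (Nat.succ_pos _)) (measure_mono ?_)
    exact Set.subset_iUnion₂ (s := fun L _ => B (L + 1)) L₀ le_rfl
  have hBinf : θ / 2 ≤ μ (⋂ L₀, U L₀) := by
    rw [Antitone.measure_iInter hUanti
      (fun L₀ => ((MeasurableSet.iUnion fun L => MeasurableSet.iUnion fun _ =>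
        hBm (L + 1)).nullMeasurableSet))
      ⟨0, measure_ne_top μ _⟩]
    exact le_iInf hUμ
  have hBne : μ (⋂ L₀, U L₀) ≠ 0 := by
    intro h
    rw [h] at hBinf
    have : θ / 2 = 0 := le_antisymm hBinf (by positivity)
    rw [ENNReal.div_eq_zero_iff] at this
    rcases this with h' | h'
    · exact hθ0 h'
    · simp at h'
  obtain ⟨x, hx⟩ := nonempty_of_measure_ne_zero hBne
  -- Step 7 : extract arithmetic structure at the point x
  have hxgood : ∀ L₀ : ℕ, ∃ L, L₀ ≤ L ∧ θ / 2 * ((L : ENNReal) + 1) ≤ cnt (L + 1) x := by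
    intro L₀
    have := Set.mem_iInter.1 hx L₀
    simp only [hUdef, Set.mem_iUnion] at this
    obtain ⟨L, hL, hmem⟩ := this
    refine ⟨L, hL, ?_⟩
    have : θ / 2 * ((L + 1 : ℕ) : ENNReal) ≤ cnt (L + 1) x := hmem
    simpa using this
  set Pred : ℕ → Prop := fun k => (T ^ (k : ℤ)) x ∈ Ξ with hPreddef
  have hcard : ∀ L : ℕ, cnt L x = (((Finset.range L).filter Pred).card : ENNReal) := by
    intro L
    simp only [hcntdef]
    rw [Finset.card_filter]
    push_cast
    refine Finset.sum_congr rfl fun k _ => ?_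
    by_cases h : (T ^ (k : ℤ)) x ∈ Ξ
    · simp [Set.indicator_apply, hPreddef, h]
    · simp [Set.indicator_apply, hPreddef, h]
  set δ₀ : ℝ := (θ / 2).toReal with hδ₀def
  have hδ₀ : 0 < δ₀ := by
    apply ENNReal.toReal_pos
    · intro h
      rw [ENNReal.div_eq_zero_iff] at h
      rcases h with h' | h'
      · exact hθ0 h'
      · simp at h'
    · exact (ENNReal.div_lt_top hθtop (by simp)).ne
  have H : ∀ L₀ : ℕ, ∃ L, L₀ ≤ L ∧
      δ₀ * ((L : ℝ) + 1) ≤ (((Finset.range (L + 1)).filter Pred).card : ℝ) := by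
    intro L₀
    obtain ⟨L, hL, hcnt⟩ := hxgood L₀
    refine ⟨L, hL, ?_⟩
    rw [hcard] at hcnt
    have hne : (((Finset.range (L + 1)).filter Pred).card : ENNReal) ≠ ⊤ := by simp
    have := ENNReal.toReal_mono hne hcnt
    rw [ENNReal.toReal_mul] at this
    simpa [hδ₀def, ENNReal.toReal_add] using this
  set m : ℕ := (2 * p).toNat with hmdef
  have hmz : ((m : ℕ) : ℤ) = 2 * p := Int.toNat_of_nonneg (by omega)
  have hm : 0 < m := by omega
  obtain ⟨a, e, he, hP1, hP2, hP3⟩ := aux_roth_extract Pred m hm δ₀ hδ₀ H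
  -- Step 8 : the contradiction
  set k1 : ℕ := a with hk1def
  set kb : ℕ := a + m * e with hkbdef
  set k2 : ℕ := a + m * e + m * e with hk2def
  have hΞ1 : (T ^ (k1 : ℤ)) x ∈ Ξ := hP1
  have hΞb : (T ^ (kb : ℤ)) x ∈ Ξ := hP2
  have hΞ2 : (T ^ (k2 : ℤ)) x ∈ Ξ := hP3
  have hme : 2 * p ≤ (m : ℤ) * (e : ℤ) := by
    have h1 : (1 : ℤ) ≤ (e : ℤ) := by exact_mod_cast he
    have h2 : (0 : ℤ) ≤ (m : ℤ) := by positivity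
    nlinarith
  set j : ℤ := (k1 : ℤ) + p - (kb : ℤ) with hjdef
  have hkbz : (kb : ℤ) = (k1 : ℤ) + (m : ℤ) * (e : ℤ) := by
    rw [hkbdef, hk1def]; push_cast; ring
  have hk2z : (k2 : ℤ) = (k1 : ℤ) + (m : ℤ) * (e : ℤ) + (m : ℤ) * (e : ℤ) := by
    rw [hk2def, hk1def]; push_cast; ring
  have hj : j ≤ 0 := by
    rw [hjdef, hkbz]
    omega
  have hstep := hΞb.1 j hj
  have e1 : (T ^ j) ((T ^ (kb : ℤ)) x) = (T ^ ((k1 : ℤ) + p)) x := by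
    rw [← hTadd j _ x]
    congr 2
    rw [hjdef]; ring
  have e2 : (T ^ (2 * 0 + p - j)) ((T ^ (kb : ℤ)) x) = (T ^ (k2 : ℤ)) x := by
    rw [← hTadd _ _ x]
    congr 2
    rw [hjdef, hk2z, hkbz]; ring
  rw [e1, e2] at hstep
  have e3 : (T ^ p) ((T ^ (k1 : ℤ)) x) = (T ^ ((k1 : ℤ) + p)) x := by
    rw [← hTadd p _ x]
    congr 2
    ring
  have hlower : (c : ℝ) < f ((T ^ ((k1 : ℤ) + p)) x) := by
    have := hΞ1.2.2
    rwa [e3] at this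
  have hupper : f ((T ^ (k2 : ℤ)) x) ≤ (c : ℝ) := hΞ2.2.1
  exact absurd ((hlower.trans hstep).trans_le hupper) (lt_irrefl _)
end

section
/- Let f be a finite measurable function on (X, 𝒳, μ, T). If F := sup_{n>0} ∑_{i=0}^{n-1} f∘T^i < +∞ μ-almost everywhere, then the filling scheme equation f = −F^− + F^+ − F^+∘T holds μ-almost everywhere, where F^+ = max(F, 0) and F^− = max(−F, 0). -/
open MeasureTheory Filter Topology

/-- **Proposition 0 (filling scheme equation).** Let `f` be a finite measurable
function on an ergodic invertible probability-preserving system `(X, μ, T)`.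
If `F = sup_{n>0} ∑_{i=0}^{n-1} f ∘ T^i < ∞` almost everywhere, then
`f = -F⁻ + F⁺ - F⁺ ∘ T` almost everywhere, where `F⁺ = max(F, 0)` and
`F⁻ = max(-F, 0)`. -/
theorem proposition0_filling_scheme_equation
    {X : Type*} [MeasurableSpace X] (μ : Measure X) [IsProbabilityMeasure μ]
    (T : Equiv.Perm X) (hTmeas : Measurable (⇑T)) (hTmeas' : Measurable (⇑T.symm))
    (hT : Ergodic (⇑T) μ)
    (f : X → ℝ) (hf : Measurable f)
    (hbdd : ∀ᵐ x ∂μ, BddAbove (Set.range fun n : ℕ =>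
      ∑ i ∈ Finset.range (n + 1), f ((T ^ i) x)))
    (F : X → ℝ)
    (hF : ∀ x, F x = ⨆ n : ℕ, ∑ i ∈ Finset.range (n + 1), f ((T ^ i) x)) :
    ∀ᵐ x ∂μ,
      f x = -(max (-(F x)) 0) + max (F x) 0 - max (F (T x)) 0 := by
  filter_upwards [hbdd] with x hb
  set S : ℕ → ℝ := fun n => ∑ i ∈ Finset.range (n + 1), f ((T ^ i) x) with hS
  set g : ℕ → ℝ := fun n => ∑ i ∈ Finset.range n, f ((T ^ i) (T x)) with hg
  have hshift : ∀ i : ℕ, f ((T ^ (i + 1)) x) = f ((T ^ i) (T x)) := by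
    intro i
    rw [pow_succ, Equiv.Perm.mul_apply]
  have hSg : ∀ n, S n = g n + f x := by
    intro n
    simp only [hS, hg, Finset.sum_range_succ', hshift, pow_zero, Equiv.Perm.coe_one, id_eq]
  have hbg : BddAbove (Set.range g) := by
    obtain ⟨c, hc⟩ := hb
    refine ⟨c - f x, ?_⟩
    rintro y ⟨n, rfl⟩
    have h1 : S n ≤ c := hc ⟨n, rfl⟩
    have h2 := hSg n
    linarith
  have hbg1 : BddAbove (Set.range fun n => g (n + 1)) :=
    hbg.mono (Set.range_comp_subset_range _ g)
  have hg0 : g 0 = 0 := by simp [hg]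
  have hgsup : ⨆ n, g n = max 0 (⨆ n, g (n + 1)) := by
    apply le_antisymm
    · refine ciSup_le fun n => ?_
      cases n with
      | zero => simp [hg0]
      | succ m => exact le_max_of_le_right (le_ciSup hbg1 m)
    · refine max_le ?_ (ciSup_le fun n => le_ciSup hbg (n + 1))
      rw [← hg0]
      exact le_ciSup hbg 0
  have hFTx : F (T x) = ⨆ n, g (n + 1) := hF (T x)
  have hFx : F x = max 0 (F (T x)) + f x := by
    rw [hF x]
    have : (⨆ n : ℕ, ∑ i ∈ Finset.range (n + 1), f ((T ^ i) x)) = ⨆ n, g n + f x := by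
      exact iSup_congr hSg
    rw [this, ← ciSup_add hbg (f x), hgsup, hFTx]
  have hmax : max (F x) 0 - max (-(F x)) 0 = F x := by
    rcases le_total (F x) 0 with h | h
    · rw [max_eq_right h, max_eq_left (by linarith : (0:ℝ) ≤ -F x)]; ring
    · rw [max_eq_left h, max_eq_right (by linarith : -F x ≤ 0)]; ring
  rw [max_comm] at hFx
  linarith
end
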